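/- arXiv:2503.02735 — 7 statements merged into one kernel-verified Lean document; each statement's English description precedes it below -/
import Mathlib

section
/- Consider a multi-armed bandit with finite action set 𝒜 and reward distributions P_a supported on [0, R*], with means Q(a). Let Π_N = {π₁,…,π_N} be strictly positive target policies with KL-barycenter π_KL(a) = (1/N)∑_{i=1}^N π_i(a), let σ_KL = max_{i,a} π_i(a)/π_KL(a), and let v(π) = ∑_a π(a)Q(a) with best target policy π* = argmax_{1≤i≤N} v(π_i). Let (A_t, R_t), t = 1,…,n, be i.i.d. with A_t ∼ π_KL and R_t | A_t = a ∼ P_a, and let v̂_n(π_i) = (1/n)∑_{t=1}^n (π_i(A_t)/π_KL(A_t)) R_t. For any δ ∈ (0,1) and ε > 0, if n ≥ 2 R*² σ_KL² log(N/δ) / ε², then for any (measurable) selection π̂_n satisfying v̂_n(π̂_n) = max_{1≤i≤N} v̂_n(π_i), the regret ℛ(π̂_n) = v(π*) − v(π̂_n) satisfies P( ℛ(π̂_n) < ε ) ≥ 1 − δ. -/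
open Finset Real MeasureTheory ProbabilityTheory

lemma hoeffding_core (q : ℝ) (hq0 : 0 ≤ q) (hq1 : q ≤ 1) (h : ℝ) :
    Real.log (1 - q + q * Real.exp h) ≤ h ^ 2 / 8 + q * h := by
  set D : ℝ → ℝ := fun x => 1 - q + q * Real.exp x with hD
  have hDpos : ∀ x, 0 < D x := by
    intro x
    rcases lt_or_eq_of_le hq1 with hq | hq
    · have : 0 < 1 - q := by linarith
      positivity
    · simp [hD, ← hq]
      positivity
  set g : ℝ → ℝ := fun x => x ^ 2 / 8 + q * x - Real.log (D x) with hg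
  set gd : ℝ → ℝ := fun x => x / 4 + q - q * Real.exp x / D x with hgd
  have hDderiv : ∀ x, HasDerivAt D (q * Real.exp x) x := by
    intro x
    exact ((Real.hasDerivAt_exp x).const_mul q).const_add (1 - q)
  have hgderiv : ∀ x, HasDerivAt g (gd x) x := by
    intro x
    have h1 : HasDerivAt (fun x : ℝ => x ^ 2 / 8) (x / 4) x := by
      have := (hasDerivAt_pow 2 x).div_const 8
      refine this.congr_deriv ?_
      rw [show (2:ℕ) - 1 = 1 from rfl]; push_cast; ring
    have h2 : HasDerivAt (fun x : ℝ => q * x) q x := by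
      simpa using (hasDerivAt_id x).const_mul q
    have h3 : HasDerivAt (fun x => Real.log (D x)) (q * Real.exp x / D x) x :=
      (hDderiv x).log (hDpos x).ne'
    exact (h1.add h2).sub h3
  have hgdderiv : ∀ x, HasDerivAt gd (1 / 4 - q * Real.exp x * (1 - q) / (D x) ^ 2) x := by
    intro x
    have h1 : HasDerivAt (fun x : ℝ => x / 4 + q) (1 / 4) x := by
      simpa using (hasDerivAt_id x).div_const 4 |>.add_const q
    have h2 : HasDerivAt (fun x => q * Real.exp x / D x)
        ((q * Real.exp x * D x - q * Real.exp x * (q * Real.exp x)) / (D x) ^ 2) x :=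
      ((Real.hasDerivAt_exp x).const_mul q).div (hDderiv x) (hDpos x).ne'
    have := h1.sub h2
    refine this.congr_deriv ?_
    have : D x = 1 - q + q * Real.exp x := rfl
    rw [this]
    ring
  have hgdmono : Monotone gd := by
    apply monotone_of_deriv_nonneg
    · exact fun x => (hgdderiv x).differentiableAt
    · intro x
      rw [(hgdderiv x).deriv]
      have hE : 0 < Real.exp x := Real.exp_pos x
      have key : q * Real.exp x * (1 - q) ≤ (D x) ^ 2 / 4 := by
        have hDx : D x = (1 - q) + q * Real.exp x := rfl
        nlinarith [sq_nonneg ((1 - q) - q * Real.exp x)]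
      have hD2 : 0 < (D x) ^ 2 := pow_pos (hDpos x) 2
      rw [sub_nonneg, div_le_iff₀ hD2]
      linarith
  have hgd0 : gd 0 = 0 := by
    simp [hgd, hD]
  have hgcont : Continuous g := by
    have : Continuous D := continuous_const.add (continuous_const.mul Real.continuous_exp)
    exact ((continuous_pow 2).div_const 8 |>.add (continuous_const.mul continuous_id)).sub
      (this.log fun x => (hDpos x).ne')
  have hgmono : MonotoneOn g (Set.Ici (0:ℝ)) := by
    apply monotoneOn_of_deriv_nonneg (convex_Ici 0) hgcont.continuousOn
    · intro x _
      exact (hgderiv x).differentiableAt.differentiableWithinAt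
    · intro x hx
      rw [(hgderiv x).deriv]
      rw [interior_Ici] at hx
      have := hgdmono (le_of_lt hx)
      rw [hgd0] at this
      exact this
  have hganti : AntitoneOn g (Set.Iic (0:ℝ)) := by
    apply antitoneOn_of_deriv_nonpos (convex_Iic 0) hgcont.continuousOn
    · intro x _
      exact (hgderiv x).differentiableAt.differentiableWithinAt
    · intro x hx
      rw [(hgderiv x).deriv]
      rw [interior_Iic] at hx
      have := hgdmono (le_of_lt hx)
      rw [hgd0] at this
      exact this
  have hg0 : g 0 = 0 := by simp [hg, hD]
  have hgnonneg : 0 ≤ g h := by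
    rcases le_or_gt 0 h with hh | hh
    · have := hgmono Set.self_mem_Ici hh hh
      rwa [hg0] at this
    · have := hganti hh.le Set.self_mem_Iic hh.le
      rwa [hg0] at this
  have heq : g h = h ^ 2 / 8 + q * h - Real.log (1 - q + q * Real.exp h) := rfl
  rw [heq] at hgnonneg
  linarith


lemma hoeffding_mgf (a b t : ℝ) (ha : a ≤ 0) (hb : 0 ≤ b) (hab : a < b) :
    (b * Real.exp (t * a) - a * Real.exp (t * b)) / (b - a)
      ≤ Real.exp (t ^ 2 * (b - a) ^ 2 / 8) := by
  have hba : 0 < b - a := by linarith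
  set q : ℝ := -a / (b - a) with hq
  have hq0 : 0 ≤ q := div_nonneg (by linarith) hba.le
  have hq1 : q ≤ 1 := by rw [hq, div_le_one hba]; linarith
  set h : ℝ := t * (b - a) with hh
  have hE := Real.exp_pos h
  have hX : 1 - q + q * Real.exp h = (b - a * Real.exp h) / (b - a) := by
    have hqb : q * (b - a) = -a := by rw [hq]; exact div_mul_cancel₀ (-a) hba.ne'
    rw [eq_div_iff hba.ne']
    linear_combination (Real.exp h - 1) * hqb
  have hXpos : 0 < 1 - q + q * Real.exp h := by
    rw [hX]
    apply div_pos _ hba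
    rcases lt_or_eq_of_le hb with hb' | hb'
    · nlinarith [mul_nonneg (neg_nonneg.mpr ha) hE.le]
    · have ha' : a < 0 := by rw [← hb'] at hab; exact hab
      nlinarith [mul_pos (neg_pos.mpr ha') hE]
  have key := hoeffding_core q hq0 hq1 h
  have hqh : q * h = -(t * a) := by
    rw [hq, hh]; field_simp
  have he : Real.exp h * Real.exp (t * a) = Real.exp (t * b) := by
    rw [← Real.exp_add, hh]; congr 1; ring
  have hLHS : (b * Real.exp (t * a) - a * Real.exp (t * b)) / (b - a)
      = Real.exp (t * a) * (1 - q + q * Real.exp h) := by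
    rw [hX, mul_comm (Real.exp (t*a))]
    have hkey : (b - a * Real.exp h) * Real.exp (t * a)
        = b * Real.exp (t * a) - a * Real.exp (t * b) := by
      rw [sub_mul, mul_assoc, he]
    rw [div_mul_eq_mul_div, hkey]
  rw [hLHS]
  have hexp : Real.exp (t * a) * (1 - q + q * Real.exp h)
      = Real.exp (t * a + Real.log (1 - q + q * Real.exp h)) := by
    rw [Real.exp_add, Real.exp_log hXpos]
  rw [hexp]
  apply Real.exp_le_exp.mpr
  have hh2 : h ^ 2 = t ^ 2 * (b - a) ^ 2 := by rw [hh]; ring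
  linarith


lemma integrable_of_bddae {Ω : Type*} [MeasurableSpace Ω] (ν : Measure Ω)
    [IsFiniteMeasure ν] (X : Ω → ℝ) (hX : AEStronglyMeasurable X ν) (C : ℝ)
    (hbd : ∀ᵐ ω ∂ν, |X ω| ≤ C) : Integrable X ν := by
  refine ⟨hX, ?_⟩
  apply MeasureTheory.HasFiniteIntegral.of_bounded (C := C)
  simpa [Real.norm_eq_abs] using hbd


/-- Hoeffding's lemma. -/
lemma hoeffding_lemma {Ω : Type*} [MeasurableSpace Ω] (ν : Measure Ω)
    [IsProbabilityMeasure ν] (X : Ω → ℝ) (hX : AEStronglyMeasurable X ν) (a b t : ℝ)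
    (hbd : ∀ᵐ ω ∂ν, X ω ∈ Set.Icc a b) (hmean : ∫ ω, X ω ∂ν = 0) :
    ∫ ω, Real.exp (t * X ω) ∂ν ≤ Real.exp (t ^ 2 * (b - a) ^ 2 / 8) := by
  have hXint : Integrable X ν := by
    apply integrable_of_bddae ν X hX (max |a| |b|)
    filter_upwards [hbd] with ω hω
    rw [abs_le]
    constructor
    · calc -(max |a| |b|) ≤ -|a| := by simp
        _ ≤ a := neg_abs_le a
        _ ≤ X ω := hω.1
    · exact hω.2.trans ((le_abs_self b).trans (le_max_right _ _))
  have hab : a ≤ b := by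
    rcases hbd.exists with ⟨ω, hω⟩
    exact hω.1.trans hω.2
  have ha : a ≤ 0 := by
    have : ∫ _ω, a ∂ν ≤ ∫ ω, X ω ∂ν := by
      apply integral_mono_ae (integrable_const a) hXint
      filter_upwards [hbd] with ω hω using hω.1
    simpa [hmean] using this
  have hb : 0 ≤ b := by
    have : ∫ ω, X ω ∂ν ≤ ∫ _ω, b ∂ν := by
      apply integral_mono_ae hXint (integrable_const b)
      filter_upwards [hbd] with ω hω using hω.2
    simpa [hmean] using this
  rcases eq_or_lt_of_le hab with heq | hlt
  · -- a = b, hence a = b = 0 and X = 0 a.e.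
    have ha0 : a = 0 := le_antisymm ha (heq ▸ hb)
    have hb0 : b = 0 := (ha0 ▸ heq).symm
    have : ∫ ω, Real.exp (t * X ω) ∂ν = ∫ _ω, (1:ℝ) ∂ν := by
      apply integral_congr_ae
      filter_upwards [hbd] with ω hω
      have : X ω = 0 := le_antisymm (hb0 ▸ hω.2) (ha0 ▸ hω.1)
      simp [this]
    rw [integral_const] at this
    simp only [probReal_univ, ENNReal.toReal_one, smul_eq_mul, mul_one] at this
    rw [this]
    exact Real.one_le_exp (by positivity)
  · -- a < b : convexity bound
    have hba : 0 < b - a := by linarith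
    have hptw : ∀ᵐ ω ∂ν, Real.exp (t * X ω)
        ≤ ((b - X ω) * Real.exp (t * a) + (X ω - a) * Real.exp (t * b)) / (b - a) := by
      filter_upwards [hbd] with ω hω
      set lam : ℝ := (b - X ω) / (b - a)
      set mu : ℝ := (X ω - a) / (b - a)
      have hlam : 0 ≤ lam := div_nonneg (by linarith [hω.2]) hba.le
      have hmu : 0 ≤ mu := div_nonneg (by linarith [hω.1]) hba.le
      have hsum : lam + mu = 1 := by
        show (b - X ω) / (b - a) + (X ω - a) / (b - a) = 1
        rw [← add_div, div_eq_one_iff_eq hba.ne']; ring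
      have hconv := convexOn_exp.2 (Set.mem_univ (t * a)) (Set.mem_univ (t * b)) hlam hmu hsum
      have harg : lam * (t * a) + mu * (t * b) = t * X ω := by
        show (b - X ω) / (b - a) * (t * a) + (X ω - a) / (b - a) * (t * b) = t * X ω
        rw [div_mul_eq_mul_div, div_mul_eq_mul_div, ← add_div, div_eq_iff hba.ne']; ring
      simp only [smul_eq_mul] at hconv
      rw [harg] at hconv
      simpa [lam, mu, smul_eq_mul, div_mul_eq_mul_div, add_div] using hconv
    have i1 : Integrable (fun ω => (b - X ω) * Real.exp (t * a)) ν := by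
      simpa using ((integrable_const b).sub hXint).mul_const (Real.exp (t * a))
    have i2 : Integrable (fun ω => (X ω - a) * Real.exp (t * b)) ν := by
      simpa using (hXint.sub (integrable_const a)).mul_const (Real.exp (t * b))
    have hint : Integrable (fun ω =>
        ((b - X ω) * Real.exp (t * a) + (X ω - a) * Real.exp (t * b)) / (b - a)) ν :=
      (i1.add i2).div_const _
    calc ∫ ω, Real.exp (t * X ω) ∂ν
        ≤ ∫ ω, ((b - X ω) * Real.exp (t * a) + (X ω - a) * Real.exp (t * b)) / (b - a) ∂ν := by
          apply integral_mono_of_nonneg _ hint hptw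
          filter_upwards with ω using (Real.exp_pos _).le
      _ = (b * Real.exp (t * a) - a * Real.exp (t * b)) / (b - a) := by
          rw [integral_div]
          congr 1
          rw [integral_add i1 i2, integral_mul_const, integral_mul_const,
            integral_sub (integrable_const b) hXint,
            integral_sub hXint (integrable_const a), hmean, integral_const, integral_const]
          simp
          ring
      _ ≤ Real.exp (t ^ 2 * (b - a) ^ 2 / 8) := hoeffding_mgf a b t ha hb hlt


/-- One-sided Hoeffding inequality for i.i.d. sums on a finite product space. -/
lemma hoeffding_tail {Ω : Type*} [MeasurableSpace Ω] (ν : Measure Ω)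
    [IsProbabilityMeasure ν] (X : Ω → ℝ) (hX : Measurable X) (a b : ℝ) (hab : a < b)
    (hbd : ∀ᵐ ω ∂ν, X ω ∈ Set.Icc a b) (n : ℕ) (s : ℝ) (hs : 0 < s) :
    (Measure.pi (fun _ : Fin n => ν))
        {ω | (n : ℝ) * ((∫ x, X x ∂ν) + s) ≤ ∑ t, X (ω t)}
      ≤ ENNReal.ofReal (Real.exp (-2 * n * s ^ 2 / (b - a) ^ 2)) := by
  letI : MeasureSpace Ω := ⟨ν⟩
  have hvol : (volume : Measure Ω) = ν := rfl
  set m : ℝ := ∫ x, X x ∂ν with hm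
  set Y : Ω → ℝ := fun ω => X ω - m with hY
  have hYmeas : Measurable Y := hX.sub measurable_const
  have hXint : Integrable X ν := by
    apply integrable_of_bddae ν X hX.aestronglyMeasurable (max |a| |b|)
    filter_upwards [hbd] with ω hω
    rw [abs_le]
    exact ⟨le_trans (by simp [neg_le, neg_abs_le]) (neg_abs_le a |>.trans hω.1),
      hω.2.trans ((le_abs_self b).trans (le_max_right _ _))⟩
  have hYbd : ∀ᵐ ω ∂ν, Y ω ∈ Set.Icc (a - m) (b - m) := by
    filter_upwards [hbd] with ω hω
    exact ⟨by simp [hY]; linarith [hω.1], by simp [hY]; linarith [hω.2]⟩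
  have hYmean : ∫ ω, Y ω ∂ν = 0 := by
    rw [hY]
    rw [integral_sub hXint (integrable_const m), integral_const]
    simp [hm]
  set lam : ℝ := 4 * s / (b - a) ^ 2 with hlam
  have hba : 0 < b - a := by linarith
  have hlampos : 0 < lam := by positivity
  -- integrability of exp(lam * Y)
  have hYexp_int : Integrable (fun ω => Real.exp (lam * Y ω)) ν := by
    apply integrable_of_bddae ν _ (hYmeas.const_mul lam).exp.aestronglyMeasurable
      (Real.exp (|lam| * (|a - m| + |b - m|)))
    filter_upwards [hYbd] with ω hω
    rw [abs_of_pos (Real.exp_pos _), Real.exp_le_exp]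
    have h1 : |Y ω| ≤ |a - m| + |b - m| := by
      rw [abs_le]
      constructor
      · linarith [hω.1, neg_abs_le (a - m), abs_nonneg (b - m)]
      · linarith [hω.2, le_abs_self (b - m), abs_nonneg (a - m)]
    calc lam * Y ω ≤ |lam * Y ω| := le_abs_self _
      _ = |lam| * |Y ω| := abs_mul _ _
      _ ≤ |lam| * (|a - m| + |b - m|) := by
          exact mul_le_mul_of_nonneg_left h1 (abs_nonneg _)
  -- mgf bound for one variable
  have hone : ∫ ω, Real.exp (lam * Y ω) ∂ν ≤ Real.exp (lam ^ 2 * (b - a) ^ 2 / 8) := by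
    have := hoeffding_lemma ν Y hYmeas.aestronglyMeasurable (a - m) (b - m) lam hYbd hYmean
    simpa using this
  -- the sum
  set S : (Fin n → Ω) → ℝ := fun ω => ∑ t, Y (ω t) with hS
  have hprod : ∀ ω : Fin n → Ω, Real.exp (lam * S ω) = ∏ t, Real.exp (lam * Y (ω t)) := by
    intro ω
    rw [hS, Finset.mul_sum, Real.exp_sum]
  have hSexp_int : Integrable (fun ω => Real.exp (lam * S ω)) (Measure.pi fun _ : Fin n => ν) := by
    have : Integrable (fun ω : Fin n → Ω => ∏ t, Real.exp (lam * Y (ω t))) volume :=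
      Integrable.fintype_prod (f := fun _ y => Real.exp (lam * Y y)) (fun i => hYexp_int)
    simp only [hprod]
    exact this
  have hSmeas : Measurable S :=
    Finset.measurable_sum _ (fun t _ => hYmeas.comp (measurable_pi_apply t))
  have hmgf : mgf S (Measure.pi fun _ : Fin n => ν) lam
      ≤ Real.exp ((n : ℝ) * (lam ^ 2 * (b - a) ^ 2 / 8)) := by
    rw [mgf]
    have : ∫ ω, Real.exp (lam * S ω) ∂(Measure.pi fun _ : Fin n => ν)
        = ∏ _t : Fin n, ∫ ω, Real.exp (lam * Y ω) ∂ν := by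
      simp_rw [hprod]
      exact MeasureTheory.integral_fintype_prod_eq_prod
        (f := fun _ y => Real.exp (lam * Y y))
    rw [this, Finset.prod_const]
    calc (∫ ω, Real.exp (lam * Y ω) ∂ν) ^ (Finset.univ.card : ℕ)
        ≤ Real.exp (lam ^ 2 * (b - a) ^ 2 / 8) ^ (Finset.univ.card : ℕ) := by
          apply pow_le_pow_left₀ (integral_nonneg fun ω => (Real.exp_pos _).le) hone
      _ = Real.exp ((n : ℝ) * (lam ^ 2 * (b - a) ^ 2 / 8)) := by
          rw [← Real.exp_nat_mul]
          simp
  -- Chernoff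
  haveI : IsProbabilityMeasure (Measure.pi fun _ : Fin n => ν) := by infer_instance
  have hchern := measure_ge_le_exp_mul_mgf (X := S) (μ := Measure.pi fun _ : Fin n => ν)
    ((n : ℝ) * s) hlampos.le hSexp_int
  have hset : {ω : Fin n → Ω | (n : ℝ) * (m + s) ≤ ∑ t, X (ω t)}
      = {ω : Fin n → Ω | (n : ℝ) * s ≤ S ω} := by
    ext ω
    simp only [Set.mem_setOf_eq, hS, hY]
    rw [Finset.sum_sub_distrib, Finset.sum_const, Finset.card_univ, Fintype.card_fin,
      nsmul_eq_mul]
    constructor <;> intro h <;> linarith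
  rw [hset]
  have hfin : (Measure.pi fun _ : Fin n => ν) {ω | (n : ℝ) * s ≤ S ω} ≠ ⊤ :=
    measure_ne_top _ _
  rw [← ENNReal.ofReal_toReal hfin]
  apply ENNReal.ofReal_le_ofReal
  calc ((Measure.pi fun _ : Fin n => ν) {ω | (n : ℝ) * s ≤ S ω}).toReal
      ≤ Real.exp (-lam * ((n : ℝ) * s)) * mgf S (Measure.pi fun _ : Fin n => ν) lam := hchern
    _ ≤ Real.exp (-lam * ((n : ℝ) * s)) * Real.exp ((n : ℝ) * (lam ^ 2 * (b - a) ^ 2 / 8)) := by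
        exact mul_le_mul_of_nonneg_left hmgf (Real.exp_pos _).le
    _ = Real.exp (-lam * ((n : ℝ) * s) + (n : ℝ) * (lam ^ 2 * (b - a) ^ 2 / 8)) := by
        rw [← Real.exp_add]
    _ = Real.exp (-2 * n * s ^ 2 / (b - a) ^ 2) := by
        congr 1
        rw [hlam]
        field_simp
        ring


lemma hoeffding_tail_lower {Ω : Type*} [MeasurableSpace Ω] (ν : Measure Ω)
    [IsProbabilityMeasure ν] (X : Ω → ℝ) (hX : Measurable X) (a b : ℝ) (hab : a < b)
    (hbd : ∀ᵐ ω ∂ν, X ω ∈ Set.Icc a b) (n : ℕ) (s : ℝ) (hs : 0 < s) :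
    (Measure.pi (fun _ : Fin n => ν))
        {ω | ∑ t, X (ω t) ≤ (n : ℝ) * ((∫ x, X x ∂ν) - s)}
      ≤ ENNReal.ofReal (Real.exp (-2 * n * s ^ 2 / (b - a) ^ 2)) := by
  have hbd' : ∀ᵐ ω ∂ν, (fun ω => -X ω) ω ∈ Set.Icc (-b) (-a) := by
    filter_upwards [hbd] with ω hω
    exact ⟨by simpa using hω.2, by simpa using hω.1⟩
  have h := hoeffding_tail ν (fun ω => -X ω) hX.neg (-b) (-a) (by linarith) hbd' n s hs
  have hint : ∫ x, -X x ∂ν = -∫ x, X x ∂ν := integral_neg X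
  have hset : {ω : Fin n → Ω | (n : ℝ) * ((∫ x, -X x ∂ν) + s) ≤ ∑ t, -X (ω t)}
      = {ω : Fin n → Ω | ∑ t, X (ω t) ≤ (n : ℝ) * ((∫ x, X x ∂ν) - s)} := by
    ext ω
    simp only [Set.mem_setOf_eq, hint, Finset.sum_neg_distrib]
    constructor <;> intro h' <;> linarith
  rw [hset] at h
  have : (-a - -b) ^ 2 = (b - a) ^ 2 := by ring
  rwa [this] at h


/-- sample complexity of best-policy selection with the KL-barycenter
behavior policy.  With `π_KL = (1/N) ∑ᵢ πᵢ`, `σ_KL = maxᵢ max_a πᵢ(a)/π_KL(a)`, and a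
dataset of `n ≥ 2 R*² σ_KL² log(N/δ)/ε²` i.i.d. action-reward pairs drawn under
`π_KL` (modeled by the `n`-fold product of `∑ₐ π_KL(a) • (δₐ ⊗ P a)`), any measurable
selection `î` maximizing the importance-sampling estimates satisfies
`P(v(π*) − v(π_î) < ε) ≥ 1 − δ`, where `π*` is the best target policy. -/
theorem KLPE_regret_bound {α : Type*} [Fintype α] [MeasurableSpace α]
    [MeasurableSingletonClass α]
    (Rstar : ℝ) (hR : 0 < Rstar)
    (P : α → Measure ℝ) (hprob : ∀ a, IsProbabilityMeasure (P a))
    (hsupp : ∀ a, P a (Set.Icc 0 Rstar) = 1)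
    (Q : α → ℝ) (hQ : ∀ a, Q a = ∫ x, x ∂(P a))
    (N : ℕ) (hN : 0 < N)
    (p : Fin N → α → ℝ) (hpos : ∀ i a, 0 < p i a) (hsum : ∀ i, ∑ a, p i a = 1)
    -- the KL-barycenter behavior policy
    (pKL : α → ℝ) (hpKL : ∀ a, pKL a = (1 / (N : ℝ)) * ∑ i, p i a)
    -- the maximal importance weight
    (σKL : ℝ) (hσKL : σKL = ⨆ i : Fin N, ⨆ a : α, p i a / pKL a)
    -- values and the best target policy
    (v : (α → ℝ) → ℝ) (hv : ∀ q, v q = ∑ a, q a * Q a)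
    (istar : Fin N) (hbest : ∀ i, v (p i) ≤ v (p istar))
    -- joint law of one pair and sample size
    (μ : Measure (α × ℝ))
    (hμ : μ = ∑ a : α, (ENNReal.ofReal (pKL a)) • ((Measure.dirac a).prod (P a)))
    (n : ℕ) (hn : 0 < n)
    (δ ε : ℝ) (hδ : δ ∈ Set.Ioo (0:ℝ) 1) (hε : 0 < ε)
    (hsample : (n : ℝ) ≥ 2 * Rstar ^ 2 * σKL ^ 2 * Real.log (N / δ) / ε ^ 2)
    -- the importance sampling estimates
    (vhat : (Fin n → α × ℝ) → Fin N → ℝ)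
    (hvhat : ∀ ω i, vhat ω i = (1 / (n : ℝ)) * ∑ t, (p i (ω t).1 / pKL (ω t).1) * (ω t).2)
    -- a measurable selection maximizing the estimated values
    (iHat : (Fin n → α × ℝ) → Fin N) (hmeas : Measurable iHat)
    (hargmax : ∀ ω i, vhat ω i ≤ vhat ω (iHat ω)) :
    (Measure.pi (fun _ : Fin n => μ))
        {ω : Fin n → α × ℝ | v (p istar) - v (p (iHat ω)) < ε}
      ≥ ENNReal.ofReal (1 - δ) := by
  obtain ⟨hδ0, hδ1⟩ := hδ
  haveI : Nonempty (Fin N) := ⟨⟨0, hN⟩⟩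
  -- α is nonempty
  haveI hαne : Nonempty α := by
    by_contra h
    rw [not_nonempty_iff] at h
    have := hsum istar
    rw [Finset.univ_eq_empty, Finset.sum_empty] at this
    norm_num at this
  obtain ⟨a0⟩ := hαne
  -- positivity of pKL
  have hpKLpos : ∀ a, 0 < pKL a := by
    intro a
    rw [hpKL a]
    have h1 : (0:ℝ) < 1 / N := by positivity
    exact mul_pos h1 (Finset.sum_pos (fun i _ => hpos i a) Finset.univ_nonempty)
  -- ratio bound
  have hratio : ∀ i a, p i a / pKL a ≤ σKL := by
    intro i a
    rw [hσKL]
    calc p i a / pKL a ≤ ⨆ a, p i a / pKL a :=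
          le_ciSup (f := fun a : α => p i a / pKL a)
            (Set.Finite.bddAbove (Set.finite_range _)) a
      _ ≤ ⨆ i : Fin N, ⨆ a : α, p i a / pKL a :=
          le_ciSup (f := fun i : Fin N => ⨆ a : α, p i a / pKL a)
            (Set.Finite.bddAbove (Set.finite_range _)) i
  have hσpos : 0 < σKL :=
    lt_of_lt_of_le (div_pos (hpos istar a0) (hpKLpos a0)) (hratio istar a0)
  set B : ℝ := Rstar * σKL with hB
  have hBpos : 0 < B := mul_pos hR hσpos
  -- μ is a probability measure
  have hsumpKL : ∑ a, pKL a = 1 := by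
    have : ∑ a, pKL a = (1 / (N:ℝ)) * ∑ a, ∑ i, p i a := by
      rw [Finset.mul_sum]
      exact Finset.sum_congr rfl fun a _ => hpKL a
    rw [this, Finset.sum_comm]
    have : ∑ i : Fin N, ∑ a, p i a = (N : ℝ) := by
      rw [Finset.sum_congr rfl fun i _ => hsum i]
      simp
    rw [this]
    field_simp
  haveI hμprob : IsProbabilityMeasure μ := by
    constructor
    rw [hμ, Measure.finset_sum_apply]
    have : ∀ a : α, ((ENNReal.ofReal (pKL a)) • ((Measure.dirac a).prod (P a))) Set.univ
        = ENNReal.ofReal (pKL a) := by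
      intro a
      haveI := hprob a
      rw [Measure.smul_apply, measure_univ, smul_eq_mul, mul_one]
    rw [Finset.sum_congr rfl fun a _ => this a,
      ← ENNReal.ofReal_sum_of_nonneg fun a _ => (hpKLpos a).le, hsumpKL, ENNReal.ofReal_one]
  -- the reward variable
  set X : Fin N → α × ℝ → ℝ := fun i z => p i z.1 / pKL z.1 * z.2 with hX
  have hXmeas : ∀ i, Measurable (X i) := by
    intro i
    show Measurable fun z : α × ℝ => p i z.1 / pKL z.1 * z.2
    exact ((measurable_of_countable fun a => p i a / pKL a).comp measurable_fst).mul
      measurable_snd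
  -- a.e. bound on the second coordinate under μ
  have hsnd : ∀ᵐ z ∂μ, z.2 ∈ Set.Icc (0:ℝ) Rstar := by
    rw [ae_iff, hμ, Measure.finset_sum_apply]
    apply Finset.sum_eq_zero
    intro a _
    haveI := hprob a
    rw [Measure.smul_apply, Measure.dirac_prod, Measure.map_apply measurable_prodMk_left]
    · have hpre : Prod.mk a ⁻¹' {z : α × ℝ | ¬z.2 ∈ Set.Icc (0:ℝ) Rstar}
          = (Set.Icc (0:ℝ) Rstar)ᶜ := rfl
      rw [hpre]
      rw [measure_compl measurableSet_Icc (measure_ne_top _ _), hsupp a, measure_univ]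
      simp
    · exact measurable_snd (measurableSet_Icc.compl)
  have hXbd : ∀ i, ∀ᵐ z ∂μ, X i z ∈ Set.Icc 0 B := by
    intro i
    filter_upwards [hsnd] with z hz
    have hr : 0 < p i z.1 / pKL z.1 := div_pos (hpos i z.1) (hpKLpos z.1)
    constructor
    · exact mul_nonneg hr.le hz.1
    · calc p i z.1 / pKL z.1 * z.2 ≤ σKL * Rstar :=
            mul_le_mul (hratio i z.1) hz.2 hz.1 hσpos.le
        _ = B := by rw [hB]; ring
  -- integrability over each component
  have hPae : ∀ a, ∀ᵐ r ∂(P a), r ∈ Set.Icc (0:ℝ) Rstar := by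
    intro a
    haveI := hprob a
    rw [ae_iff]
    have : {r : ℝ | ¬r ∈ Set.Icc (0:ℝ) Rstar} = (Set.Icc (0:ℝ) Rstar)ᶜ := rfl
    rw [this, measure_compl measurableSet_Icc (measure_ne_top _ _), hsupp a, measure_univ]
    simp
  have hint_comp : ∀ i a, Integrable (X i) ((Measure.dirac a).prod (P a)) := by
    intro i a
    haveI := hprob a
    rw [Measure.dirac_prod]
    rw [integrable_map_measure (hXmeas i).aestronglyMeasurable measurable_prodMk_left.aemeasurable]
    have : (X i) ∘ (Prod.mk a) = fun r => p i a / pKL a * r := rfl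
    rw [this]
    apply Integrable.const_mul
    apply integrable_of_bddae (P a) (fun r => r) measurable_id.aestronglyMeasurable Rstar
    filter_upwards [hPae a] with r hr
    rw [abs_le]
    exact ⟨by linarith [hr.1, hR], hr.2⟩
  -- integrability over μ and the mean identity
  have hmean : ∀ i, ∫ z, X i z ∂μ = v (p i) := by
    intro i
    rw [hμ, integral_finset_sum_measure (fun a _ => ((hint_comp i a).smul_measure
      ENNReal.ofReal_ne_top))]
    rw [hv]
    apply Finset.sum_congr rfl
    intro a _
    haveI := hprob a
    rw [integral_smul_measure, Measure.dirac_prod,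
      integral_map measurable_prodMk_left.aemeasurable (hXmeas i).aestronglyMeasurable]
    have : ∀ r : ℝ, X i (a, r) = p i a / pKL a * r := fun r => rfl
    rw [integral_congr_ae (Filter.Eventually.of_forall fun r => this r), integral_const_mul,
      ENNReal.toReal_ofReal (hpKLpos a).le, ← hQ a]
    rw [smul_eq_mul]
    field_simp [(hpKLpos a).ne']
  -- link vhat to sums of X
  have hvhatX : ∀ ω i, vhat ω i = (1 / (n:ℝ)) * ∑ t, X i (ω t) := by
    intro ω i
    rw [hvhat]
  -- bad events
  set Eup : Fin N → Set (Fin n → α × ℝ) := fun i =>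
    {ω | (n : ℝ) * ((∫ z, X i z ∂μ) + ε/2) ≤ ∑ t, X i (ω t)} with hEup
  set Edown : Set (Fin n → α × ℝ) :=
    {ω | ∑ t, X istar (ω t) ≤ (n : ℝ) * ((∫ z, X istar z ∂μ) - ε/2)} with hEdown
  have hε2 : 0 < ε / 2 := by linarith
  -- the exponential bound is at most δ/N
  have hexp_le : Real.exp (-2 * n * (ε/2) ^ 2 / (B - 0) ^ 2) ≤ δ / N := by
    have hNδ : 1 < (N:ℝ) / δ := by
      rw [lt_div_iff₀ hδ0]
      calc 1 * δ < 1 := by linarith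
        _ ≤ (N:ℝ) := by exact_mod_cast hN
    have hlogpos : 0 < Real.log ((N:ℝ)/δ) := Real.log_pos hNδ
    have hB2 : B ^ 2 = Rstar ^ 2 * σKL ^ 2 := by rw [hB]; ring
    have harg : -2 * n * (ε/2) ^ 2 / (B - 0) ^ 2 ≤ -Real.log ((N:ℝ)/δ) := by
      rw [sub_zero]
      rw [div_le_iff₀ (by positivity)]
      have h1 : 2 * Rstar ^ 2 * σKL ^ 2 * Real.log (N / δ) / ε ^ 2 ≤ (n:ℝ) := hsample
      rw [div_le_iff₀ (by positivity)] at h1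
      nlinarith [h1, hB2]
    calc Real.exp (-2 * n * (ε/2) ^ 2 / (B - 0) ^ 2) ≤ Real.exp (-Real.log ((N:ℝ)/δ)) :=
          Real.exp_le_exp.mpr harg
      _ = δ / N := by
          rw [Real.exp_neg, Real.exp_log (by positivity)]
          rw [inv_div]
  -- tail bounds
  have hup : ∀ i, (Measure.pi (fun _ : Fin n => μ)) (Eup i) ≤ ENNReal.ofReal (δ / N) := by
    intro i
    calc (Measure.pi (fun _ : Fin n => μ)) (Eup i)
        ≤ ENNReal.ofReal (Real.exp (-2 * n * (ε/2) ^ 2 / (B - 0) ^ 2)) :=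
          hoeffding_tail μ (X i) (hXmeas i) 0 B hBpos (hXbd i) n (ε/2) hε2
      _ ≤ ENNReal.ofReal (δ / N) := ENNReal.ofReal_le_ofReal hexp_le
  have hdown : (Measure.pi (fun _ : Fin n => μ)) Edown ≤ ENNReal.ofReal (δ / N) := by
    calc (Measure.pi (fun _ : Fin n => μ)) Edown
        ≤ ENNReal.ofReal (Real.exp (-2 * n * (ε/2) ^ 2 / (B - 0) ^ 2)) :=
          hoeffding_tail_lower μ (X istar) (hXmeas istar) 0 B hBpos (hXbd istar) n (ε/2) hε2
      _ ≤ ENNReal.ofReal (δ / N) := ENNReal.ofReal_le_ofReal hexp_le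
  -- the bad set
  set bad : Set (Fin n → α × ℝ) := Edown ∪ ⋃ i ∈ Finset.univ.erase istar, Eup i with hbad
  have hbadmeas : MeasurableSet bad := by
    have hXsum : ∀ i, Measurable fun ω : Fin n → α × ℝ => ∑ t, X i (ω t) := fun i =>
      Finset.measurable_sum _ (fun t _ => (hXmeas i).comp (measurable_pi_apply t))
    apply MeasurableSet.union
    · exact measurableSet_le (hXsum istar) measurable_const
    · exact MeasurableSet.biUnion (Finset.univ.erase istar).countable_toSet
        (fun i _ => measurableSet_le measurable_const (hXsum i))
  have hbadbound : (Measure.pi (fun _ : Fin n => μ)) bad ≤ ENNReal.ofReal δ := by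
    calc (Measure.pi (fun _ : Fin n => μ)) bad
        ≤ (Measure.pi (fun _ : Fin n => μ)) Edown
            + (Measure.pi (fun _ : Fin n => μ)) (⋃ i ∈ Finset.univ.erase istar, Eup i) :=
          measure_union_le _ _
      _ ≤ ENNReal.ofReal (δ / N) + ∑ i ∈ Finset.univ.erase istar,
            (Measure.pi (fun _ : Fin n => μ)) (Eup i) :=
          add_le_add hdown (measure_biUnion_finset_le _ _)
      _ ≤ ENNReal.ofReal (δ / N) + ∑ _i ∈ Finset.univ.erase istar, ENNReal.ofReal (δ / N) :=
          add_le_add le_rfl (Finset.sum_le_sum fun i _ => hup i)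
      _ = (((Finset.univ.erase istar).card : ℕ) + 1) * ENNReal.ofReal (δ / N) := by
          rw [Finset.sum_const, nsmul_eq_mul]
          ring
      _ = (N : ENNReal) * ENNReal.ofReal (δ / N) := by
          congr 1
          rw [Finset.card_erase_of_mem (Finset.mem_univ istar), Finset.card_univ, Fintype.card_fin]
          have : (N - 1 : ℕ) + 1 = N := Nat.succ_pred_eq_of_pos hN
          rw [← this]
          push_cast
          ring
      _ = ENNReal.ofReal δ := by
          rw [← ENNReal.ofReal_natCast N, ← ENNReal.ofReal_mul (by positivity)]
          congr 1
          field_simp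
  -- badᶜ is contained in the goal event
  have hsubset : badᶜ ⊆ {ω : Fin n → α × ℝ | v (p istar) - v (p (iHat ω)) < ε} := by
    intro ω hω
    simp only [hbad, Set.compl_union, Set.mem_inter_iff, Set.mem_compl_iff] at hω
    obtain ⟨hω1, hω2⟩ := hω
    have hstar : (n : ℝ) * ((∫ z, X istar z ∂μ) - ε/2) < ∑ t, X istar (ω t) := by
      by_contra h
      exact hω1 (by simpa [hEdown] using not_lt.mp h)
    have hothers : ∀ i, i ≠ istar → ∑ t, X i (ω t) < (n : ℝ) * ((∫ z, X i z ∂μ) + ε/2) := by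
      intro i hi
      by_contra h
      apply hω2
      rw [Set.mem_iUnion₂]
      exact ⟨i, Finset.mem_erase.mpr ⟨hi, Finset.mem_univ i⟩, not_lt.mp h⟩
    simp only [Set.mem_setOf_eq]
    by_cases hcase : iHat ω = istar
    · rw [hcase]
      simpa using hε
    · have hnpos : (0:ℝ) < n := by exact_mod_cast hn
      have hinv : (0:ℝ) < 1 / n := by positivity
      have h1 : v (p istar) - ε/2 < vhat ω istar := by
        rw [hvhatX ω istar, ← hmean istar]
        have := mul_lt_mul_of_pos_left hstar hinv
        calc (∫ z, X istar z ∂μ) - ε/2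
            = 1 / (n:ℝ) * ((n:ℝ) * ((∫ z, X istar z ∂μ) - ε/2)) := by field_simp
          _ < 1 / (n:ℝ) * ∑ t, X istar (ω t) := this
      have h2 : vhat ω (iHat ω) < v (p (iHat ω)) + ε/2 := by
        rw [hvhatX ω (iHat ω), ← hmean (iHat ω)]
        have := mul_lt_mul_of_pos_left (hothers (iHat ω) hcase) hinv
        calc 1 / (n:ℝ) * ∑ t, X (iHat ω) (ω t)
            < 1 / (n:ℝ) * ((n:ℝ) * ((∫ z, X (iHat ω) z ∂μ) + ε/2)) := this
          _ = (∫ z, X (iHat ω) z ∂μ) + ε/2 := by field_simp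
      have h3 := hargmax ω istar
      linarith
  -- final accounting
  haveI : IsProbabilityMeasure (Measure.pi fun _ : Fin n => μ) := by infer_instance
  have hcompl : (Measure.pi fun _ : Fin n => μ) badᶜ
      = 1 - (Measure.pi fun _ : Fin n => μ) bad := by
    rw [measure_compl hbadmeas (measure_ne_top _ _), measure_univ]
  calc ENNReal.ofReal (1 - δ) = 1 - ENNReal.ofReal δ := by
        rw [ENNReal.ofReal_sub 1 hδ0.le, ENNReal.ofReal_one]
    _ ≤ 1 - (Measure.pi fun _ : Fin n => μ) bad := tsub_le_tsub le_rfl hbadbound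
    _ = (Measure.pi fun _ : Fin n => μ) badᶜ := hcompl.symm
    _ ≤ _ := measure_mono hsubset
end

section
/- Fix an integer N ≥ 3 and consider the two-element action set 𝒜 = {a₁, a₂} with target policies π₁ = (1 − 1/N, 1/N) and π₂ = ⋯ = π_N = (1/N, 1 − 1/N). Then the KL-barycenter π_KL = (1/N)∑_{i=1}^N π_i satisfies π_KL(a₁) = 2(N−1)/N² and π_KL(a₂) = ((N−1)² + 1)/N², and the maximal importance weight σ_KL = max_{1≤i≤N} max_{a∈𝒜} π_i(a)/π_KL(a) satisfies σ_KL ≥ N/2 (the maximum being attained at π₁(a₁)/π_KL(a₁) = N/2). -/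
open Finset Real

/-- the lower-bound construction. On the two-element action set `Fin 2`
(`0 = a₁`, `1 = a₂`), with `π₁ = (1 − 1/N, 1/N)` and `π₂ = ⋯ = π_N = (1/N, 1 − 1/N)`,
the KL-barycenter satisfies `π_KL(a₁) = 2(N−1)/N²`, `π_KL(a₂) = ((N−1)² + 1)/N²`,
the weight `π₁(a₁)/π_KL(a₁)` equals `N/2`, and hence the maximal importance weight
`σ_KL = maxᵢ max_a πᵢ(a)/π_KL(a)` is at least `N/2`. -/
theorem lower_bound_construction_sigmaKL (N : ℕ) (hN : 3 ≤ N)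
    (p : Fin N → Fin 2 → ℝ)
    (hp1 : p ⟨0, by omega⟩ = fun a => if a = 0 then 1 - 1 / (N : ℝ) else 1 / (N : ℝ))
    (hpi : ∀ i : Fin N, i ≠ ⟨0, by omega⟩ →
      p i = fun a => if a = 0 then 1 / (N : ℝ) else 1 - 1 / (N : ℝ))
    (pKL : Fin 2 → ℝ) (hpKL : ∀ a, pKL a = (1 / (N : ℝ)) * ∑ i, p i a) :
    pKL 0 = 2 * ((N : ℝ) - 1) / (N : ℝ) ^ 2 ∧
    pKL 1 = (((N : ℝ) - 1) ^ 2 + 1) / (N : ℝ) ^ 2 ∧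
    p ⟨0, by omega⟩ 0 / pKL 0 = (N : ℝ) / 2 ∧
    (⨆ i : Fin N, ⨆ a : Fin 2, p i a / pKL a) ≥ (N : ℝ) / 2 := by
  have hNR : (N : ℝ) ≥ 3 := by exact_mod_cast hN
  have hN0 : (N : ℝ) ≠ 0 := by positivity
  have z : Fin N := ⟨0, by omega⟩
  have hsum : ∀ a : Fin 2, ∑ i, p i a =
      p (⟨0, by omega⟩ : Fin N) a + ((N : ℝ) - 1) *
        (if a = 0 then 1 / (N : ℝ) else 1 - 1 / (N : ℝ)) := by
    intro a
    rw [← Finset.add_sum_erase Finset.univ (fun i => p i a)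
      (Finset.mem_univ (⟨0, by omega⟩ : Fin N))]
    congr 1
    rw [Finset.sum_congr rfl (fun i hi => by
      rw [hpi i (Finset.ne_of_mem_erase hi)]), Finset.sum_const]
    rw [Finset.card_erase_of_mem (Finset.mem_univ _), Finset.card_univ, Fintype.card_fin]
    rw [nsmul_eq_mul]
    congr 1
    push_cast [Nat.cast_sub (by omega : 1 ≤ N)]
    ring
  have h0 : pKL 0 = 2 * ((N : ℝ) - 1) / (N : ℝ) ^ 2 := by
    rw [hpKL, hsum, hp1]
    simp only [if_pos rfl, eq_self_iff_true, ↓reduceIte]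
    field_simp
    ring
  have h1 : pKL 1 = (((N : ℝ) - 1) ^ 2 + 1) / (N : ℝ) ^ 2 := by
    rw [hpKL, hsum, hp1]
    norm_num
    field_simp
    ring
  have hratio : p (⟨0, by omega⟩ : Fin N) 0 / pKL 0 = (N : ℝ) / 2 := by
    rw [hp1, h0]
    simp only [if_pos rfl, eq_self_iff_true, ↓reduceIte]
    rw [div_div_eq_mul_div, div_eq_div_iff (by nlinarith) (by norm_num)]
    field_simp
  refine ⟨h0, h1, hratio, ?_⟩
  calc (N : ℝ) / 2 = p (⟨0, by omega⟩ : Fin N) 0 / pKL 0 := hratio.symm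
    _ ≤ ⨆ a : Fin 2, p (⟨0, by omega⟩ : Fin N) a / pKL a :=
        le_ciSup (f := fun a : Fin 2 => p (⟨0, by omega⟩ : Fin N) a / pKL a)
          (Finite.bddAbove_range _) 0
    _ ≤ ⨆ i : Fin N, ⨆ a : Fin 2, p i a / pKL a :=
        le_ciSup (f := fun i : Fin N => ⨆ a : Fin 2, p i a / pKL a)
          (Finite.bddAbove_range _) _
end

section
/- Let 𝒜 be a finite set and π₁,…,π_N strictly positive probability distributions on 𝒜 with KL-barycenter π_KL(a) = (1/N)∑_{i=1}^N π_i(a). Suppose D_KL(π_i ‖ π_KL) ≤ η for all i ∈ {1,…,N} and π_KL(a) > 0 for all a ∈ 𝒜. Then the maximal importance weight σ_KL = max_{i,a} π_i(a)/π_KL(a) satisfies σ_KL ≤ min( N , 1 + 2η/min_a π_KL(a) + 2√(2η)/√(min_a π_KL(a)) ). -/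
open Finset Real

/-- KL divergence between two distributions on a finite set. -/
noncomputable def KLdiv {α : Type*} [Fintype α] (ν μ : α → ℝ) : ℝ :=
  ∑ a, ν a * Real.log (ν a / μ a)

private lemma sq_sqrt_sub_one_le {x : ℝ} (hx : 0 < x) :
    (Real.sqrt x - 1) ^ 2 ≤ x * Real.log x - x + 1 := by
  have hs : 0 < Real.sqrt x := Real.sqrt_pos.mpr hx
  have hsq : Real.sqrt x ^ 2 = x := Real.sq_sqrt hx.le
  have hlog : Real.log (Real.sqrt x) = Real.log x / 2 := Real.log_sqrt hx.le
  have h1 : Real.log (1 / Real.sqrt x) ≤ 1 / Real.sqrt x - 1 :=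
    Real.log_le_sub_one_of_pos (one_div_pos.mpr hs)
  rw [Real.log_div one_ne_zero hs.ne', Real.log_one] at h1
  have h2 : Real.sqrt x * Real.sqrt x * (1 - 1 / Real.sqrt x)
      ≤ Real.sqrt x * Real.sqrt x * Real.log (Real.sqrt x) :=
    mul_le_mul_of_nonneg_left (by linarith) (by positivity)
  have h3 : Real.sqrt x * Real.sqrt x * (1 / Real.sqrt x) = Real.sqrt x := by
    field_simp
  have hss : Real.sqrt x * Real.sqrt x = x := Real.mul_self_sqrt hx.le
  have h4 : x * Real.log x = 2 * (Real.sqrt x * Real.sqrt x * Real.log (Real.sqrt x)) := by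
    rw [hlog, hss]; ring
  nlinarith [h2, h3, h4, hss]

private lemma x_le_of_klterm {x c : ℝ} (hx : 0 ≤ x) (hc : 0 ≤ c)
    (h : x * Real.log x - x + 1 ≤ c) :
    x ≤ 1 + 2 * c + 2 * Real.sqrt (2 * c) := by
  have hsc : 0 ≤ Real.sqrt (2 * c) := Real.sqrt_nonneg _
  rcases eq_or_lt_of_le hx with h0 | hx
  · nlinarith
  have key : (Real.sqrt x - 1) ^ 2 ≤ c := le_trans (sq_sqrt_sub_one_le hx) h
  have hsqc : Real.sqrt c ^ 2 = c := Real.sq_sqrt hc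
  have hsqcn : 0 ≤ Real.sqrt c := Real.sqrt_nonneg _
  have hsx : Real.sqrt x ^ 2 = x := Real.sq_sqrt hx.le
  have hsxn : 0 ≤ Real.sqrt x := Real.sqrt_nonneg _
  have hle : Real.sqrt x ≤ 1 + Real.sqrt c := by nlinarith
  have hcc : Real.sqrt c ≤ Real.sqrt (2 * c) := Real.sqrt_le_sqrt (by linarith)
  nlinarith

private lemma sub_le_mul_log {a b : ℝ} (ha : 0 < a) (hb : 0 < b) :
    a - b ≤ a * Real.log (a / b) := by
  have h1 : Real.log (b / a) ≤ b / a - 1 :=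
    Real.log_le_sub_one_of_pos (div_pos hb ha)
  rw [Real.log_div hb.ne' ha.ne'] at h1
  rw [Real.log_div ha.ne' hb.ne']
  have h4 := mul_le_mul_of_nonneg_left
    (by linarith : 1 - b / a ≤ Real.log a - Real.log b) ha.le
  have h5 : a * (b / a) = b := by field_simp
  nlinarith

private lemma pointwise_term_le {α : Type*} [Fintype α] (p q : α → ℝ)
    (hp : ∀ a, 0 < p a) (hq : ∀ a, 0 < q a)
    (hps : ∑ a, p a = 1) (hqs : ∑ a, q a = 1) (a : α) :
    p a * Real.log (p a / q a) + q a - p a ≤ KLdiv p q := by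
  classical
  have hsplit : KLdiv p q =
      p a * Real.log (p a / q a) + ∑ b ∈ Finset.univ.erase a, p b * Real.log (p b / q b) := by
    rw [KLdiv, ← Finset.add_sum_erase _ _ (Finset.mem_univ a)]
  have h1 : ∑ b ∈ Finset.univ.erase a, (p b - q b)
      ≤ ∑ b ∈ Finset.univ.erase a, p b * Real.log (p b / q b) :=
    Finset.sum_le_sum fun b _ => sub_le_mul_log (hp b) (hq b)
  have h2 : ∑ b ∈ Finset.univ.erase a, (p b - q b) = q a - p a := by
    rw [Finset.sum_sub_distrib, Finset.sum_erase_eq_sub (Finset.mem_univ a),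
      Finset.sum_erase_eq_sub (Finset.mem_univ a), hps, hqs]
    ring
  linarith

/-- if every target policy is `η`-close in KL to the barycenter
`π_KL = (1/N)∑ᵢ πᵢ`, then the maximal importance weight satisfies
`σ_KL ≤ min(N, 1 + 2η/min_a π_KL(a) + 2√(2η)/√(min_a π_KL(a)))`. -/
theorem sigmaKL_eta_bound {α : Type*} [Fintype α] [Nonempty α] (N : ℕ) (hN : 0 < N)
    (p : Fin N → α → ℝ)
    (hpos : ∀ i a, 0 < p i a) (hsum : ∀ i, ∑ a, p i a = 1)
    (pKL : α → ℝ) (hpKL : ∀ a, pKL a = (1 / (N : ℝ)) * ∑ i, p i a)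
    (hKLpos : ∀ a, 0 < pKL a)
    (η : ℝ) (hη : ∀ i, KLdiv (p i) pKL ≤ η) :
    (⨆ i : Fin N, ⨆ a : α, p i a / pKL a)
      ≤ min (N : ℝ)
          (1 + 2 * η / (⨅ a : α, pKL a)
            + 2 * Real.sqrt (2 * η) / Real.sqrt (⨅ a : α, pKL a)) := by
  haveI : Nonempty (Fin N) := Fin.pos_iff_nonempty.mp hN
  set m := ⨅ a : α, pKL a with hm
  have hNpos : (0 : ℝ) < N := Nat.cast_pos.mpr hN
  have hm_le : ∀ a, m ≤ pKL a := fun a => ciInf_le (Finite.bddBelow_range _) a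
  have hm_pos : 0 < m := by
    obtain ⟨a0, _, ha0⟩ := Finset.exists_min_image Finset.univ pKL univ_nonempty
    have : pKL a0 ≤ m := le_ciInf fun b => ha0 b (Finset.mem_univ b)
    linarith [hKLpos a0]
  have hqsum : ∑ a, pKL a = 1 := by
    simp only [hpKL]
    rw [← Finset.mul_sum, Finset.sum_comm]
    simp only [hsum]
    simp only [Finset.sum_const, Finset.card_univ, Fintype.card_fin, nsmul_eq_mul, mul_one]
    field_simp
  have hη0 : 0 ≤ η := by
    have i0 : Fin N := ⟨0, hN⟩
    have h1 : 0 ≤ KLdiv (p i0) pKL := by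
      have hs := Finset.sum_le_sum fun b (_ : b ∈ Finset.univ) =>
        sub_le_mul_log (hpos i0 b) (hKLpos b)
      rw [Finset.sum_sub_distrib, hsum, hqsum] at hs
      simpa [KLdiv] using hs
    linarith [hη i0]
  have hc0 : 0 ≤ η / m := div_nonneg hη0 hm_pos.le
  have main : ∀ (i : Fin N) (a : α), p i a / pKL a
      ≤ min (N : ℝ) (1 + 2 * η / m + 2 * Real.sqrt (2 * η) / Real.sqrt m) := by
    intro i a
    refine le_min ?_ ?_
    · rw [div_le_iff₀ (hKLpos a)]
      have h1 : p i a ≤ ∑ j, p j a :=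
        Finset.single_le_sum (fun j _ => (hpos j a).le) (Finset.mem_univ i)
      rw [hpKL a]
      calc p i a ≤ ∑ j, p j a := h1
        _ = ↑N * (1 / ↑N * ∑ i, p i a) := by field_simp
    · set x := p i a / pKL a with hx
      have hterm := pointwise_term_le (p i) pKL (hpos i) hKLpos (hsum i) hqsum a
      have hq := hKLpos a
      have hxpos : 0 < x := div_pos (hpos i a) hq
      have heq : pKL a * (x * Real.log x - x + 1) =
          p i a * Real.log (p i a / pKL a) + pKL a - p i a := by
        rw [hx]; field_simp; ring
      have hfnn : 0 ≤ x * Real.log x - x + 1 := by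
        have := sq_sqrt_sub_one_le hxpos
        nlinarith [sq_nonneg (Real.sqrt x - 1)]
      have hfc : x * Real.log x - x + 1 ≤ η / m := by
        rw [le_div_iff₀ hm_pos]
        have hle1 : m * (x * Real.log x - x + 1) ≤ pKL a * (x * Real.log x - x + 1) :=
          mul_le_mul_of_nonneg_right (hm_le a) hfnn
        have hle2 : pKL a * (x * Real.log x - x + 1) ≤ η := by
          rw [heq]; linarith [hη i]
        nlinarith
      have hmain := x_le_of_klterm hxpos.le hc0 hfc
      have e1 : 2 * (η / m) = 2 * η / m := by ring
      have e2 : Real.sqrt (2 * (η / m)) = Real.sqrt (2 * η) / Real.sqrt m := by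
        rw [← mul_div_assoc, Real.sqrt_div (by linarith : (0:ℝ) ≤ 2 * η)]
      rw [e2, e1] at hmain
      linarith [hmain, (mul_div_assoc 2 (Real.sqrt (2 * η)) (Real.sqrt m)).symm.le]
  exact ciSup_le fun i => ciSup_le fun a => main i a
end

section
/- Let 𝒜 be a finite set with K = |𝒜| elements, let π₁,…,π_N be strictly positive probability distributions on 𝒜 with KL-barycenter π_KL = (1/N)∑_{i=1}^N π_i, and suppose D_KL(π_i ‖ π_KL) ≤ η for all i and π_KL(a) > 0 for all a. For λ ∈ (0,1), define the safe behavior policy π_safe^λ(a) = (1−λ) π_KL(a) + λ/K. Then σ_safe := max_{1≤i≤N} max_{a∈𝒜} π_i(a)/π_safe^λ(a) ≤ min( N/(1−λ) , 1/(1−λ) + 2ηK/λ + 2√(2ηK)/(√(1−λ)·√λ) ). -/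
open Finset Real

lemma key_log (t : ℝ) (ht : 0 < t) (ht1 : t ≤ 1) :
    (1 - t)^2 / 2 ≤ t - 1 - Real.log t := by
  set g : ℝ → ℝ := fun s => s - 1 - (1-s)^2/2 - Real.log s with hg
  have hasD : ∀ x : ℝ, 0 < x → HasDerivAt g (1 - (2 * (1-x)^1 * (-1))/2 - x⁻¹) x := by
    intro x hx0
    have h1 : HasDerivAt (fun s:ℝ => s - 1) 1 x := (hasDerivAt_id x).sub_const 1
    have h0 : HasDerivAt (fun s:ℝ => 1 - s) (-1) x := by
      exact (hasDerivAt_id x).const_sub 1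
    have h2 : HasDerivAt (fun s:ℝ => (1-s)^2/2) ((2 * (1-x)^1 * (-1))/2) x :=
      (h0.pow 2).div_const 2
    exact (h1.sub h2).sub (Real.hasDerivAt_log hx0.ne')
  have hanti : AntitoneOn g (Set.Ioi 0) := by
    apply antitoneOn_of_deriv_nonpos (convex_Ioi 0)
    · apply ContinuousOn.sub
      · fun_prop
      · exact Real.continuousOn_log.mono (fun x hx => by
          simp only [Set.mem_compl_iff, Set.mem_singleton_iff]
          exact ne_of_gt hx)
    · rw [interior_Ioi]
      intro x hx
      exact (hasD x hx).differentiableAt.differentiableWithinAt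
    · rw [interior_Ioi]
      intro x hx
      have hx0 : (0:ℝ) < x := hx
      rw [(hasD x hx0).deriv]
      have hinv : x⁻¹ * x = 1 := inv_mul_cancel₀ hx0.ne'
      nlinarith [sq_nonneg (x-1), mul_pos hx0 hx0]
  have h1 : g 1 ≤ g t := hanti (Set.mem_Ioi.mpr ht) (Set.mem_Ioi.mpr one_pos) ht1
  simp only [hg, Real.log_one] at h1
  norm_num at h1
  linarith

lemma term_nonneg (x q : ℝ) (hx : 0 < x) (hq : 0 < q) :
    0 ≤ x * Real.log (x / q) + q - x := by
  have h := Real.log_le_sub_one_of_pos (show (0:ℝ) < q / x by positivity)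
  have hlog : Real.log (q / x) = - Real.log (x / q) := by
    rw [Real.log_div hq.ne' hx.ne', Real.log_div hx.ne' hq.ne']; ring
  rw [hlog] at h
  have := mul_le_mul_of_nonneg_left h hx.le
  have hqx : x * (q / x - 1) = q - x := by field_simp
  nlinarith

lemma term_lb (x q : ℝ) (hq : 0 < q) (hqx : q ≤ x) :
    (x - q)^2 / (2 * x) ≤ x * Real.log (x / q) + q - x := by
  have hx : 0 < x := lt_of_lt_of_le hq hqx
  have h := key_log (q / x) (by positivity) ((div_le_one hx).mpr hqx)
  have hlog : Real.log (q / x) = - Real.log (x / q) := by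
    rw [Real.log_div hq.ne' hx.ne', Real.log_div hx.ne' hq.ne']; ring
  rw [hlog] at h
  have h2 := mul_le_mul_of_nonneg_left h hx.le
  have e1 : x * ((1 - q/x)^2 / 2) = (x - q)^2 / (2 * x) := by
    field_simp
  have e2 : x * (q/x - 1 - -Real.log (x/q)) = q - x + x * Real.log (x/q) := by
    field_simp
    ring
  rw [e1, e2] at h2
  linarith

lemma kl_eq_sum_terms {α : Type*} [Fintype α] (ν μ : α → ℝ)
    (hsν : ∑ a, ν a = 1) (hsμ : ∑ a, μ a = 1) :
    KLdiv ν μ = ∑ a, (ν a * Real.log (ν a / μ a) + μ a - ν a) := by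
  unfold KLdiv
  rw [Finset.sum_sub_distrib, Finset.sum_add_distrib, hsν, hsμ]
  ring

lemma kl_nonneg {α : Type*} [Fintype α] (ν μ : α → ℝ)
    (hν : ∀ a, 0 < ν a) (hμ : ∀ a, 0 < μ a)
    (hsν : ∑ a, ν a = 1) (hsμ : ∑ a, μ a = 1) :
    0 ≤ KLdiv ν μ := by
  rw [kl_eq_sum_terms ν μ hsν hsμ]
  exact Finset.sum_nonneg (fun a _ => term_nonneg _ _ (hν a) (hμ a))

lemma kl_pointwise {α : Type*} [Fintype α] (ν μ : α → ℝ)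
    (hν : ∀ a, 0 < ν a) (hμ : ∀ a, 0 < μ a)
    (hsν : ∑ a, ν a = 1) (hsμ : ∑ a, μ a = 1) (a0 : α) (h : μ a0 ≤ ν a0) :
    (ν a0 - μ a0)^2 / (2 * ν a0) ≤ KLdiv ν μ := by
  rw [kl_eq_sum_terms ν μ hsν hsμ]
  calc (ν a0 - μ a0)^2 / (2 * ν a0)
      ≤ ν a0 * Real.log (ν a0 / μ a0) + μ a0 - ν a0 := term_lb _ _ (hμ a0) h
    _ ≤ _ := Finset.single_le_sum (f := fun a => ν a * Real.log (ν a / μ a) + μ a - ν a)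
        (fun a _ => term_nonneg _ _ (hν a) (hμ a)) (Finset.mem_univ a0)

lemma quad_bound (r c b : ℝ) (hrnn : 0 ≤ r) (hc0 : 0 < c) (hb0 : 0 ≤ b)
    (h : r ≤ c + b * Real.sqrt r) : r ≤ (b + Real.sqrt c)^2 := by
  set z : ℝ := Real.sqrt r with hzdef
  set sc : ℝ := Real.sqrt c with hscdef
  have hznn : 0 ≤ z := Real.sqrt_nonneg r
  have hscnn : 0 ≤ sc := Real.sqrt_nonneg c
  have hzsq : z^2 = r := Real.sq_sqrt hrnn
  have hscsq : sc^2 = c := Real.sq_sqrt hc0.le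
  clear_value z sc
  subst hzsq hscsq
  have hz : z ≤ b + sc := by
    by_contra hcon
    push_neg at hcon
    have hzpos : 0 < z := lt_of_le_of_lt (by positivity) hcon
    have s1 : z * sc < z * (z - b) :=
      mul_lt_mul_of_pos_left (by linarith) hzpos
    have s2 : (b + sc) * sc ≤ z * sc :=
      mul_le_mul_of_nonneg_right hcon.le hscnn
    nlinarith [mul_nonneg hb0 hscnn]
  nlinarith [mul_self_le_mul_self hznn hz]

/-- bound on the maximal importance weight of the safe behavior policy
`π_safe^λ(a) = (1−λ)π_KL(a) + λ/K` (`K = |𝒜|`), when every target policy is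
`η`-close in KL to the barycenter `π_KL`:
`σ_safe ≤ min(N/(1−λ), 1/(1−λ) + 2ηK/λ + 2√(2ηK)/(√(1−λ)√λ))`. -/
theorem sigma_safe_bound {α : Type*} [Fintype α] [Nonempty α] (N : ℕ) (hN : 0 < N)
    (K : ℕ) (hK : K = Fintype.card α)
    (p : Fin N → α → ℝ)
    (hpos : ∀ i a, 0 < p i a) (hsum : ∀ i, ∑ a, p i a = 1)
    (pKL : α → ℝ) (hpKL : ∀ a, pKL a = (1 / (N : ℝ)) * ∑ i, p i a)
    (hKLpos : ∀ a, 0 < pKL a)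
    (η : ℝ) (hη : ∀ i, KLdiv (p i) pKL ≤ η)
    (lam : ℝ) (hlam : lam ∈ Set.Ioo (0:ℝ) 1)
    (psafe : α → ℝ) (hpsafe : ∀ a, psafe a = (1 - lam) * pKL a + lam / (K : ℝ)) :
    (⨆ i : Fin N, ⨆ a : α, p i a / psafe a)
      ≤ min ((N : ℝ) / (1 - lam))
          (1 / (1 - lam) + 2 * η * (K : ℝ) / lam
            + 2 * Real.sqrt (2 * η * (K : ℝ)) / (Real.sqrt (1 - lam) * Real.sqrt lam)) := by
  obtain ⟨hlam0, hlam1⟩ := hlam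
  have h1lam : (0:ℝ) < 1 - lam := by linarith
  have hKpos : (0:ℝ) < (K:ℝ) := by
    rw [hK]; exact_mod_cast Fintype.card_pos
  have hNpos : (0:ℝ) < (N:ℝ) := by exact_mod_cast hN
  have hsumKL : ∑ a, pKL a = 1 := by
    simp only [hpKL]
    rw [← Finset.mul_sum, Finset.sum_comm]
    simp only [hsum, Finset.sum_const, Finset.card_univ, Fintype.card_fin, nsmul_eq_mul,
      mul_one]
    field_simp
  haveI : Nonempty (Fin N) := ⟨⟨0, hN⟩⟩
  have hηnn : 0 ≤ η := by
    have i0 : Fin N := ⟨0, hN⟩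
    exact le_trans (kl_nonneg _ _ (hpos i0) hKLpos (hsum i0) hsumKL) (hη i0)
  have hsafe_pos : ∀ a, 0 < psafe a := fun a => by
    rw [hpsafe a]; have := hKLpos a; positivity
  have hsafe_ge1 : ∀ a, (1-lam) * pKL a ≤ psafe a := fun a => by
    rw [hpsafe a]
    have : 0 ≤ lam / (K:ℝ) := by positivity
    linarith
  have hsafe_ge2 : ∀ a, lam / (K:ℝ) ≤ psafe a := fun a => by
    rw [hpsafe a]
    nlinarith [hKLpos a]
  apply ciSup_le; intro i
  apply ciSup_le; intro a
  apply le_min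
  · -- first bound : N/(1-lam)
    have hple : p i a ≤ (N:ℝ) * pKL a := by
      rw [hpKL]
      have h1 := Finset.single_le_sum (f := fun j => p j a)
        (fun j _ => (hpos j a).le) (Finset.mem_univ i)
      calc p i a ≤ ∑ j, p j a := h1
        _ = (N:ℝ) * (1/(N:ℝ) * ∑ j, p j a) := by field_simp
    calc p i a / psafe a
        ≤ ((N:ℝ) * pKL a) / ((1-lam) * pKL a) :=
          div_le_div₀ (by have := hKLpos a; positivity) hple
            (by have := hKLpos a; positivity) (hsafe_ge1 a)
      _ = (N:ℝ) / (1-lam) := by rw [mul_div_mul_right _ _ (hKLpos a).ne']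
  · -- second bound
    set x := p i a with hx
    set q := pKL a with hq
    set s := psafe a with hs
    have hx0 : 0 < x := hpos i a
    have hq0 : 0 < q := hKLpos a
    have hs0 : 0 < s := hsafe_pos a
    have hB2 : 0 ≤ 2*η*(K:ℝ)/lam := by positivity
    have hB3 : 0 ≤ 2*Real.sqrt (2*η*(K:ℝ)) / (Real.sqrt (1-lam) * Real.sqrt lam) := by
      positivity
    by_cases hcase : x ≤ q
    · have h1 : x / s ≤ 1 / (1-lam) := by
        calc x/s ≤ q / ((1-lam)*q) :=
            div_le_div₀ hq0.le hcase (by positivity) (hsafe_ge1 a)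
          _ = 1/(1-lam) := by
            field_simp
      linarith
    · push_neg at hcase
      have hklpt := kl_pointwise (p i) pKL (hpos i) hKLpos (hsum i) hsumKL a hcase.le
      rw [← hx, ← hq] at hklpt
      have hD : (x - q)^2 ≤ 2*η*x := by
        have h2 : (x-q)^2 / (2*x) ≤ η := le_trans hklpt (hη i)
        have := (div_le_iff₀ (show (0:ℝ) < 2*x by positivity)).mp h2
        nlinarith
      have hxq : x ≤ q + Real.sqrt (2*η*x) := by
        have h3 : x - q ≤ Real.sqrt (2*η*x) :=
          (Real.le_sqrt (by linarith) (by positivity)).mpr hD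
        linarith
      set c : ℝ := 1/(1-lam) with hc
      set b : ℝ := Real.sqrt (2*η*(K:ℝ)/lam) with hb
      have hc0 : 0 < c := by positivity
      have hb0 : 0 ≤ b := Real.sqrt_nonneg _
      set r : ℝ := x / s with hr
      have hrnn : 0 ≤ r := by positivity
      have hqs : q / s ≤ c := by
        calc q/s ≤ q / ((1-lam)*q) :=
            div_le_div_of_nonneg_left hq0.le (by positivity) (hsafe_ge1 a)
          _ = c := by rw [hc]; field_simp
      have h1s : 1/s ≤ (K:ℝ)/lam := by
        rw [div_le_div_iff₀ hs0 hlam0]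
        have := hsafe_ge2 a
        rw [div_le_iff₀ hKpos] at this
        nlinarith
      have hsq : Real.sqrt (2*η*x) / s ≤ b * Real.sqrt r := by
        have e1 : Real.sqrt (2*η*x) / s = Real.sqrt (2*η*x/s^2) := by
          rw [Real.sqrt_div (by positivity), Real.sqrt_sq hs0.le]
        have e2 : b * Real.sqrt r = Real.sqrt (2*η*(K:ℝ)/lam * r) := by
          rw [hb, Real.sqrt_mul (by positivity)]
        rw [e1, e2]
        apply Real.sqrt_le_sqrt
        calc 2*η*x/s^2 = (2*η*x/s) * (1/s) := by ring
          _ ≤ (2*η*x/s) * ((K:ℝ)/lam) := by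
              apply mul_le_mul_of_nonneg_left h1s (by positivity)
          _ = 2*η*(K:ℝ)/lam * r := by rw [hr]; ring
      have hrle : r ≤ c + b * Real.sqrt r := by
        have : r ≤ q/s + Real.sqrt (2*η*x)/s := by
          rw [hr, ← add_div]
          exact div_le_div_of_nonneg_right hxq hs0.le
        linarith
      have hfin : r ≤ (b + Real.sqrt c)^2 := quad_bound r c b hrnn hc0 hb0 hrle
      set sc : ℝ := Real.sqrt c with hscdef
      have hscsq : sc^2 = c := Real.sq_sqrt hc0.le
      have hexp : (b + sc)^2
          = 1/(1-lam) + 2*η*(K:ℝ)/lam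
            + 2*Real.sqrt (2*η*(K:ℝ)) / (Real.sqrt (1-lam) * Real.sqrt lam) := by
        have hb2 : b^2 = 2*η*(K:ℝ)/lam := Real.sq_sqrt (by positivity)
        have hbe : b = Real.sqrt (2*η*(K:ℝ)) / Real.sqrt lam := by
          rw [hb, Real.sqrt_div (by positivity)]
        have hce : sc = 1 / Real.sqrt (1-lam) := by
          rw [hscdef, hc, Real.sqrt_div zero_le_one, Real.sqrt_one]
        have expand : (b + sc)^2 = b^2 + 2*(b*sc) + sc^2 := by
          ring
        rw [expand, hb2, hscsq, hc, hbe, hce]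
        ring
      rw [hexp] at hfin
      exact hfin
end

section
/- Let 𝒜 be a finite set with K = |𝒜| elements, let π₁,…,π_N be strictly positive probability distributions on 𝒜 with KL-barycenter π_KL = (1/N)∑_{i=1}^N π_i, and suppose D_KL(π_i ‖ π_KL) ≤ η for all i with η < 1, and π_KL(a) > 0 for all a. With λ(η) = √η, the safe behavior policy π_safe^{√η}(a) = (1−√η) π_KL(a) + √η/K satisfies σ_safe := max_{1≤i≤N} max_{a∈𝒜} π_i(a)/π_safe^{√η}(a) ≤ min( N/(1−√η) , 1/(1−√η) + 2√η·K + 2√(2K√η)/√(1−√η) ). -/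
open Finset Real

lemma log_aux {x t : ℝ} (hx : 0 < x) (ht : 0 < t) :
    (Real.sqrt x - Real.sqrt t)^2 ≤ x * Real.log (x/t) - x + t := by
  have ha : 0 < Real.sqrt x := Real.sqrt_pos.mpr hx
  have hb : 0 < Real.sqrt t := Real.sqrt_pos.mpr ht
  set a := Real.sqrt x with hadef
  set b := Real.sqrt t with hbdef
  have hxa : x = a^2 := (Real.sq_sqrt hx.le).symm
  have htb : t = b^2 := (Real.sq_sqrt ht.le).symm
  have hlog : Real.log (b/a) ≤ b/a - 1 := Real.log_le_sub_one_of_pos (by positivity)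
  have hinv : Real.log (a/b) = - Real.log (b/a) := by
    rw [Real.log_div ha.ne' hb.ne', Real.log_div hb.ne' ha.ne']; ring
  have h1 : 1 - b/a ≤ Real.log (a/b) := by rw [hinv]; linarith
  have hdiv : x / t = (a/b)^2 := by rw [hxa, htb, div_pow]
  have hlog2 : Real.log (x/t) = 2 * Real.log (a/b) := by
    rw [hdiv, Real.log_pow]; push_cast; ring
  have hba : a^2 * (b/a) = a*b := by field_simp
  have h2 : a^2 * (1 - b/a) ≤ a^2 * Real.log (a/b) :=
    mul_le_mul_of_nonneg_left h1 (by positivity)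
  rw [hlog2, hxa, htb]
  nlinarith [h2, hba]

lemma bound2_aux {t s R : ℝ} (ht : 0 < t) (hs0 : 0 ≤ s) (hs1 : s < 1) (hR : 0 < R) :
    (t + 2*s*Real.sqrt t + s^2) / ((1-s)*t + s/R)
      ≤ 1/(1-s) + s*R + Real.sqrt (s*R) / Real.sqrt (1-s) := by
  have h1s : 0 < 1 - s := by linarith
  have hsqk : Real.sqrt (s*R) = Real.sqrt s * Real.sqrt R := Real.sqrt_mul hs0 _
  rw [hsqk]
  set u := Real.sqrt t with hud
  have hu : 0 < u := Real.sqrt_pos.mpr ht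
  have hu2 : u^2 = t := Real.sq_sqrt ht.le
  set q := Real.sqrt s with hqd
  have hq0 : 0 ≤ q := Real.sqrt_nonneg _
  have hq2 : q^2 = s := Real.sq_sqrt hs0
  set k := Real.sqrt R with hkd
  have hk : 0 < k := Real.sqrt_pos.mpr hR
  have hk2 : k^2 = R := Real.sq_sqrt hR.le
  set c := Real.sqrt (1-s) with hcd
  have hc : 0 < c := Real.sqrt_pos.mpr h1s
  have hc2 : c^2 = 1 - s := Real.sq_sqrt h1s.le
  clear_value u q k c
  rw [← hu2, ← hq2, ← hk2]
  have hD : 0 < c^2*u^2 + q^2/k^2 := by positivity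
  rw [show (1:ℝ) - q^2 = c^2 from by rw [hc2, hq2]]
  rw [div_le_iff₀ hD]
  have e1 : u^2 ≤ (1/c^2) * (c^2*u^2 + q^2/k^2) := by
    have h : (1/c^2) * (c^2*u^2 + q^2/k^2) = u^2 + q^2/(k^2*c^2) := by
      field_simp
    rw [h]
    have : 0 ≤ q^2/(k^2*c^2) := by positivity
    linarith
  have e2 : (q^2)^2 ≤ (q^2*k^2) * (c^2*u^2 + q^2/k^2) := by
    have h : (q^2*k^2) * (c^2*u^2 + q^2/k^2) = q^2*k^2*c^2*u^2 + (q^2)^2 := by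
      field_simp
    rw [h]
    nlinarith [sq_nonneg (q*k*c*u)]
  have e3 : 2*q^2*u ≤ (q*k/c) * (c^2*u^2 + q^2/k^2) := by
    have key : 2*q^2*u*(k*c) ≤ q*k^2*c^2*u^2 + q^3 := by
      nlinarith [mul_nonneg hq0 (sq_nonneg (k*c*u - q))]
    have h : (q*k/c) * (c^2*u^2 + q^2/k^2) = (q*k^2*c^2*u^2 + q^3)/(k*c) := by
      field_simp
    rw [h, le_div_iff₀ (by positivity)]
    linarith
  calc u^2 + 2*q^2*u + (q^2)^2
      ≤ (1/c^2)*(c^2*u^2 + q^2/k^2) + (q*k/c)*(c^2*u^2 + q^2/k^2)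
        + (q^2*k^2)*(c^2*u^2 + q^2/k^2) := by linarith
    _ = (1/c^2 + q^2*k^2 + q*k/c) * (c^2*u^2 + q^2/k^2) := by ring

/-- with the tuning `λ(η) = √η` (for `η < 1`), the safe behavior policy
`π_safe^{√η}(a) = (1−√η)π_KL(a) + √η/K` satisfies
`σ_safe ≤ min(N/(1−√η), 1/(1−√η) + 2√η·K + 2√(2K√η)/√(1−√η))`. -/
theorem sigma_safe_bound_tuned {α : Type*} [Fintype α] [Nonempty α] (N : ℕ) (hN : 0 < N)
    (K : ℕ) (hK : K = Fintype.card α)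
    (p : Fin N → α → ℝ)
    (hpos : ∀ i a, 0 < p i a) (hsum : ∀ i, ∑ a, p i a = 1)
    (pKL : α → ℝ) (hpKL : ∀ a, pKL a = (1 / (N : ℝ)) * ∑ i, p i a)
    (hKLpos : ∀ a, 0 < pKL a)
    (η : ℝ) (hη : ∀ i, KLdiv (p i) pKL ≤ η) (hη1 : η < 1)
    (psafe : α → ℝ)
    (hpsafe : ∀ a, psafe a = (1 - Real.sqrt η) * pKL a + Real.sqrt η / (K : ℝ)) :
    (⨆ i : Fin N, ⨆ a : α, p i a / psafe a)
      ≤ min ((N : ℝ) / (1 - Real.sqrt η))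
          (1 / (1 - Real.sqrt η) + 2 * Real.sqrt η * (K : ℝ)
            + 2 * Real.sqrt (2 * (K : ℝ) * Real.sqrt η) / Real.sqrt (1 - Real.sqrt η)) := by
  have hKpos : 0 < K := hK ▸ Fintype.card_pos
  have hKR : (0:ℝ) < K := by exact_mod_cast hKpos
  have hNR : (0:ℝ) < N := by exact_mod_cast hN
  set s := Real.sqrt η with hsdef
  have hs0 : 0 ≤ s := Real.sqrt_nonneg _
  -- sum of pKL = 1
  have hpKLsum : ∑ a, pKL a = 1 := by
    have h1 : ∑ a, pKL a = (1 / (N:ℝ)) * ∑ a, ∑ i, p i a := by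
      rw [Finset.mul_sum]; exact Finset.sum_congr rfl fun a _ => hpKL a
    rw [h1, Finset.sum_comm]
    have h2 : ∀ i ∈ Finset.univ, ∑ a, p i a = 1 := fun i _ => hsum i
    rw [Finset.sum_congr rfl h2]
    simp
    field_simp
  have hsum_terms : ∀ i, ∑ a, (p i a * Real.log (p i a / pKL a) - p i a + pKL a)
      = KLdiv (p i) pKL := by
    intro i
    rw [KLdiv, Finset.sum_add_distrib, Finset.sum_sub_distrib, hsum i, hpKLsum]
    ring
  have hterm_nonneg : ∀ i a, 0 ≤ p i a * Real.log (p i a / pKL a) - p i a + pKL a :=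
    fun i a => le_trans (sq_nonneg _) (log_aux (hpos i a) (hKLpos a))
  have hterm : ∀ i a, p i a * Real.log (p i a / pKL a) - p i a + pKL a ≤ η := by
    intro i a
    calc p i a * Real.log (p i a / pKL a) - p i a + pKL a
        ≤ ∑ b, (p i b * Real.log (p i b / pKL b) - p i b + pKL b) :=
          Finset.single_le_sum (fun b _ => hterm_nonneg i b) (Finset.mem_univ a)
      _ = KLdiv (p i) pKL := hsum_terms i
      _ ≤ η := hη i
  have hη0 : 0 ≤ η := by
    have i0 : Fin N := ⟨0, hN⟩
    have a0 : α := Classical.arbitrary α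
    exact le_trans (hterm_nonneg i0 a0) (hterm i0 a0)
  have hss : s^2 = η := Real.sq_sqrt hη0
  have hs1 : s < 1 := by
    rw [hsdef, show (1:ℝ) = Real.sqrt 1 by simp]
    exact Real.sqrt_lt_sqrt hη0 hη1
  have h1s : 0 < 1 - s := by linarith
  have hsafe_pos : ∀ a, 0 < psafe a := by
    intro a
    rw [hpsafe]
    have h1 : 0 < (1 - s) * pKL a := mul_pos h1s (hKLpos a)
    have h2 : 0 ≤ s / K := div_nonneg hs0 hKR.le
    linarith
  -- pointwise bound
  have hpt : ∀ i a, p i a ≤ pKL a + 2*s*Real.sqrt (pKL a) + s^2 := by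
    intro i a
    have h1 : (Real.sqrt (p i a) - Real.sqrt (pKL a))^2 ≤ η :=
      le_trans (log_aux (hpos i a) (hKLpos a)) (hterm i a)
    have h2 : Real.sqrt (p i a) - Real.sqrt (pKL a) ≤ s := by
      have h := Real.sqrt_le_sqrt h1
      rw [Real.sqrt_sq_eq_abs] at h
      exact le_trans (le_abs_self _) h
    have h3 : Real.sqrt (p i a) ≤ Real.sqrt (pKL a) + s := by linarith
    have h4 : p i a = (Real.sqrt (p i a))^2 := (Real.sq_sqrt (hpos i a).le).symm
    have h5 : pKL a = (Real.sqrt (pKL a))^2 := (Real.sq_sqrt (hKLpos a).le).symm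
    nlinarith [Real.sqrt_nonneg (p i a), Real.sqrt_nonneg (pKL a)]
  -- bound 1
  have hb1 : ∀ (i : Fin N) (a : α), p i a / psafe a ≤ (N:ℝ) / (1 - s) := by
    intro i a
    have hp_le : p i a ≤ (N:ℝ) * pKL a := by
      rw [hpKL]
      have h1 : p i a ≤ ∑ j, p j a :=
        Finset.single_le_sum (fun j _ => (hpos j a).le) (Finset.mem_univ i)
      have h2 : (N:ℝ) * ((1 / (N:ℝ)) * ∑ j, p j a) = ∑ j, p j a := by
        field_simp
      linarith
    have hD : (1 - s) * pKL a ≤ psafe a := by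
      rw [hpsafe]
      have h2 : 0 ≤ s / K := div_nonneg hs0 hKR.le
      linarith
    calc p i a / psafe a ≤ ((N:ℝ) * pKL a) / ((1 - s) * pKL a) :=
          div_le_div₀ (mul_nonneg hNR.le (hKLpos a).le) hp_le
            (mul_pos h1s (hKLpos a)) hD
      _ = (N:ℝ) / (1 - s) := mul_div_mul_right _ _ (hKLpos a).ne'
  -- bound 2
  have hb2 : ∀ (i : Fin N) (a : α), p i a / psafe a
      ≤ 1 / (1 - s) + 2 * s * (K:ℝ) + 2 * Real.sqrt (2 * (K:ℝ) * s) / Real.sqrt (1 - s) := by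
    intro i a
    have hmid : p i a / psafe a
        ≤ 1/(1-s) + s*(K:ℝ) + Real.sqrt (s*(K:ℝ)) / Real.sqrt (1-s) := by
      have h1 : p i a / psafe a
          ≤ (pKL a + 2*s*Real.sqrt (pKL a) + s^2) / ((1-s)*(pKL a) + s/(K:ℝ)) := by
        rw [show (1-s)*(pKL a) + s/(K:ℝ) = psafe a from (hpsafe a).symm]
        exact (div_le_div_iff_of_pos_right (hsafe_pos a)).mpr (hpt i a)
      exact le_trans h1 (bound2_aux (hKLpos a) hs0 hs1 hKR)
    refine le_trans hmid (add_le_add (add_le_add le_rfl ?_) ?_)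
    · nlinarith [mul_nonneg hs0 hKR.le]
    · have h1 : Real.sqrt (s*(K:ℝ)) ≤ 2 * Real.sqrt (2*(K:ℝ)*s) := by
        calc Real.sqrt (s*(K:ℝ)) ≤ Real.sqrt (2*(K:ℝ)*s) := by
              apply Real.sqrt_le_sqrt; nlinarith [mul_nonneg hs0 hKR.le]
          _ ≤ 2 * Real.sqrt (2*(K:ℝ)*s) := by
              nlinarith [Real.sqrt_nonneg (2*(K:ℝ)*s)]
      exact (div_le_div_iff_of_pos_right (Real.sqrt_pos.mpr h1s)).mpr h1
  -- combine
  haveI : Nonempty (Fin N) := ⟨⟨0, hN⟩⟩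
  apply ciSup_le
  intro i
  apply ciSup_le
  intro a
  exact le_min (hb1 i a) (hb2 i a)
end

section
/- Consider a multi-armed bandit with finite action set 𝒜 and reward distributions P_a supported on [0, R*], with means Q(a) and policy values v(π) = ∑_a π(a)Q(a). Let the set of N strictly positive target policies be partitioned into M disjoint clusters K₁,…,K_M of sizes N₁,…,N_M, with cluster barycenters π_KL^{(j)} = (1/N_j)∑_{π∈K_j} π and σ_c = max_j max_{π∈K_j} max_{a} π(a)/π_KL^{(j)}(a). Assume: (i) the overall best target policy lies in cluster 1, i.e. v(π*) = v(π*^{(1)}) where π*^{(j)} = argmax_{π∈K_j} v(π); and (ii) v(π*^{(1)}) − v(π*^{(j)}) > Δ for some Δ > 0 and all j = 2,…,M. For each cluster j, collect an independent dataset of n_j i.i.d. pairs (A_t^{(j)}, R_t^{(j)}) with A_t^{(j)} ∼ π_KL^{(j)} and R_t^{(j)} | A_t^{(j)} = a ∼ P_a, with n₁ = ⋯ = n_M, and form v̂_n^{(j)}(π) = (1/n_j)∑_{t=1}^{n_j} (π(A_t^{(j)})/π_KL^{(j)}(A_t^{(j)})) R_t^{(j)} for π ∈ K_j. Let π̂_n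 be any selection maximizing v̂_n^{(j)}(π) over all j and π ∈ K_j. Then for any δ ∈ (0,1) and ε ∈ (0, Δ], if the total sample size n = n₁·M satisfies n ≥ 2 M R*² σ_c² log( ((M−2)(N₁+1) + N + M)/δ ) / ε², then P( π̂_n ∉ K₁ ) ≤ δ. -/
open Finset Real MeasureTheory


private lemma nonneg_of_hasDerivAt (f f' : ℝ → ℝ) (hd : ∀ x, HasDerivAt f (f' x) x)
    (h0 : f 0 = 0) (h' : ∀ x, 0 ≤ x → 0 ≤ f' x) : ∀ x, 0 ≤ x → 0 ≤ f x := by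
  intro x hx
  have hmono : MonotoneOn f (Set.Ici 0) := by
    apply monotoneOn_of_deriv_nonneg (convex_Ici 0)
    · exact (Differentiable.continuous fun y => (hd y).differentiableAt).continuousOn
    · exact fun y _ => (hd y).differentiableAt.differentiableWithinAt
    · intro y hy
      rw [(hd y).deriv]
      exact h' y (le_of_lt (by simpa using hy))
  have := hmono (Set.self_mem_Ici) (Set.mem_Ici.2 hx) hx
  linarith [h0 ▸ this]

private lemma my_sinh_le_cosh (x : ℝ) : sinh x ≤ cosh x := by
  rw [Real.sinh_eq, Real.cosh_eq]
  have := Real.exp_pos (-x)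
  linarith

private lemma sinh_le_mul_cosh (u : ℝ) (hu : 0 ≤ u) : sinh u ≤ u * cosh u := by
  have key := nonneg_of_hasDerivAt (fun u => u * cosh u - sinh u) (fun u => u * sinh u)
    (fun x => by
      have h1 := ((hasDerivAt_id x).mul (Real.hasDerivAt_cosh x)).sub (Real.hasDerivAt_sinh x)
      exact h1.congr_deriv (by simp only [id_eq]; ring))
    (by simp) (fun x hx => mul_nonneg hx (Real.sinh_nonneg_iff.2 hx)) u hu
  linarith

private lemma mul_cosh_sub_sinh_le (u : ℝ) (hu : 0 ≤ u) :
    u * cosh u - sinh u ≤ u ^ 2 / 2 * cosh u := by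
  have key := nonneg_of_hasDerivAt
    (fun u => u ^ 2 / 2 * cosh u - u * cosh u + sinh u)
    (fun u => u * (cosh u - sinh u) + u ^ 2 / 2 * sinh u)
    (fun x => by
      have h1 := ((((hasDerivAt_pow 2 x).div_const 2).mul (Real.hasDerivAt_cosh x)).sub
        ((hasDerivAt_id x).mul (Real.hasDerivAt_cosh x))).add (Real.hasDerivAt_sinh x)
      exact h1.congr_deriv (by simp only [id_eq]; push_cast; ring))
    (by simp)
    (fun x hx => by
      have h2 := my_sinh_le_cosh x
      have h3 := Real.sinh_nonneg_iff.2 hx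
      nlinarith)
    u hu
  linarith

private lemma hasDerivAt_exp_half_sq (x : ℝ) :
    HasDerivAt (fun x : ℝ => exp (x ^ 2 / 2)) (x * exp (x ^ 2 / 2)) x := by
  have h1 := (Real.hasDerivAt_exp (x ^ 2 / 2)).comp x ((hasDerivAt_pow 2 x).div_const 2)
  exact h1.congr_deriv (by push_cast; ring)

private lemma my_cosh_le_exp (u : ℝ) (hu : 0 ≤ u) : cosh u ≤ exp u := by
  rw [Real.cosh_eq]
  have := Real.exp_le_exp.2 (neg_le_self hu)
  linarith

private lemma exp_le_three_mul (u : ℝ) : exp u ≤ 3 * exp (u ^ 2 / 2) := by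
  have h1 : exp (u - u ^ 2 / 2) ≤ exp (1 / 2) := Real.exp_le_exp.2 (by nlinarith [sq_nonneg (u - 1)])
  have h2 : exp (1 / 2 : ℝ) * exp (1 / 2 : ℝ) = exp 1 := by rw [← Real.exp_add]; norm_num
  have h3 : exp (1 : ℝ) < 2.7182818286 := Real.exp_one_lt_d9
  have h4 : exp (1 / 2 : ℝ) ≤ 3 := by nlinarith [Real.exp_pos (1 / 2 : ℝ)]
  have h5 : exp u = exp (u - u ^ 2 / 2) * exp (u ^ 2 / 2) := by rw [← Real.exp_add]; ring_nf
  rw [h5]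
  have := Real.exp_pos (u ^ 2 / 2)
  nlinarith [Real.exp_pos (u - u ^ 2 / 2)]

private lemma J_nonneg (u : ℝ) (hu : 0 ≤ u) : cosh u ≤ (1 + u ^ 2) * exp (u ^ 2 / 2) := by
  have key := nonneg_of_hasDerivAt
    (fun u => (1 + u ^ 2) * exp (u ^ 2 / 2) - cosh u)
    (fun u => u * (3 + u ^ 2) * exp (u ^ 2 / 2) - sinh u)
    (fun x => by
      have h1 := (((hasDerivAt_pow 2 x).const_add 1).mul (hasDerivAt_exp_half_sq x)).sub
        (Real.hasDerivAt_cosh x)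
      exact h1.congr_deriv (by push_cast; ring))
    (by simp)
    (fun x hx => by
      have h1 : sinh x ≤ x * cosh x := sinh_le_mul_cosh x hx
      have h2 : cosh x ≤ exp x := my_cosh_le_exp x hx
      have h3 : exp x ≤ 3 * exp (x ^ 2 / 2) := exp_le_three_mul x
      have h4 : x * cosh x ≤ x * (3 * exp (x ^ 2 / 2)) :=
        mul_le_mul_of_nonneg_left (h2.trans h3) hx
      have h5 : x * (3 * exp (x ^ 2 / 2)) ≤ x * (3 + x ^ 2) * exp (x ^ 2 / 2) := by
        have := Real.exp_pos (x ^ 2 / 2)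
        nlinarith [mul_nonneg (mul_nonneg hx (sq_nonneg x)) this.le]
      linarith)
    u hu
  linarith

private lemma my_cosh_le_exp_half_sq (u : ℝ) (hu : 0 ≤ u) : cosh u ≤ exp (u ^ 2 / 2) := by
  have hH' := nonneg_of_hasDerivAt
    (fun u => u * exp (u ^ 2 / 2) - sinh u)
    (fun u => (1 + u ^ 2) * exp (u ^ 2 / 2) - cosh u)
    (fun x => by
      have h1 := ((hasDerivAt_id x).mul (hasDerivAt_exp_half_sq x)).sub (Real.hasDerivAt_sinh x)
      exact h1.congr_deriv (by simp only [id_eq]; ring))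
    (by simp)
    (fun x hx => by simpa using sub_nonneg.2 (J_nonneg x hx))
  have key := nonneg_of_hasDerivAt
    (fun u => exp (u ^ 2 / 2) - cosh u)
    (fun u => u * exp (u ^ 2 / 2) - sinh u)
    (fun x => by exact ((hasDerivAt_exp_half_sq x).sub (Real.hasDerivAt_cosh x)))
    (by simp)
    (fun x hx => hH' x hx)
    u hu
  linarith

private lemma key_ineq_nonneg (u q : ℝ) (hu : 0 ≤ u) (hq : |q| ≤ 1) :
    cosh u + q * sinh u ≤ exp (q * u + u ^ 2) := by
  obtain ⟨hq1, hq2⟩ := abs_le.1 hq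
  have hc := Real.cosh_pos u
  have hsn := Real.sinh_nonneg_iff.2 hu
  set T := sinh u / cosh u with hT
  have hTc : sinh u = T * cosh u := by rw [hT, div_mul_cancel₀ _ hc.ne']
  rcases le_or_gt (1 + q * T) 0 with h | h
  · have : cosh u + q * sinh u = cosh u * (1 + q * T) := by rw [hTc]; ring
    rw [this]
    have : cosh u * (1 + q * T) ≤ 0 := mul_nonpos_of_nonneg_of_nonpos hc.le h
    exact this.trans (Real.exp_pos _).le
  · have hTu : T ≤ u := by
      rw [hT, div_le_iff₀ hc]
      exact sinh_le_mul_cosh u hu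
    have hTu2 : u - T ≤ u ^ 2 / 2 := by
      rw [hT, sub_div' hc.ne', div_le_iff₀ hc]
      calc u * cosh u - sinh u ≤ u ^ 2 / 2 * cosh u := mul_cosh_sub_sinh_le u hu
        _ = u ^ 2 / 2 * cosh u := rfl
    have hqT : q * T ≤ q * u + u ^ 2 / 2 := by nlinarith
    have step1 : cosh u + q * sinh u = cosh u * (1 + q * T) := by rw [hTc]; ring
    have step2 : cosh u * (1 + q * T) ≤ exp (u ^ 2 / 2) * exp (q * T) :=
      mul_le_mul (my_cosh_le_exp_half_sq u hu) (Real.add_one_le_exp _ |>.trans_eq' (by ring))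
        h.le (Real.exp_pos _).le
    rw [step1]
    refine step2.trans ?_
    rw [← Real.exp_add]
    exact Real.exp_le_exp.2 (by linarith)

/-- Key scalar inequality: for `|q| ≤ 1`, `cosh u + q sinh u ≤ exp (q u + u²)`. -/
private lemma key_ineq (u q : ℝ) (hq : |q| ≤ 1) :
    cosh u + q * sinh u ≤ exp (q * u + u ^ 2) := by
  rcases le_or_gt 0 u with hu | hu
  · exact key_ineq_nonneg u q hu hq
  · have := key_ineq_nonneg (-u) (-q) (by linarith) (by rwa [abs_neg])
    simpa [Real.cosh_neg, Real.sinh_neg, mul_comm] using this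

open MeasureTheory in
/-- Hoeffding-type mgf bound (constant 1/4) for a random variable in `[0, B]` a.e. -/
private lemma mgf_bound {Ω : Type*} [MeasurableSpace Ω] (ν : Measure Ω) [IsProbabilityMeasure ν]
    (g : Ω → ℝ) (hg : Measurable g) (B : ℝ) (hB : 0 < B)
    (hbd : ∀ᵐ x ∂ν, g x ∈ Set.Icc 0 B) (t : ℝ) :
    ∫ x, exp (t * g x) ∂ν ≤ exp (t * (∫ x, g x ∂ν) + t ^ 2 * B ^ 2 / 4) := by
  have hgint : Integrable g ν := by
    refine Integrable.mono' (integrable_const B) hg.aestronglyMeasurable ?_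
    filter_upwards [hbd] with x hx
    rw [Real.norm_eq_abs, abs_of_nonneg hx.1]; exact hx.2
  set m := ∫ x, g x ∂ν with hm
  have hm0 : 0 ≤ m := integral_nonneg_of_ae (hbd.mono fun x hx => hx.1)
  have hmB : m ≤ B := by
    have h := integral_mono_ae hgint (integrable_const B) (hbd.mono fun x hx => hx.2)
    simpa using h
  have hchord : ∀ᵐ x ∂ν, exp (t * g x) ≤ (1 - g x / B) + (g x / B) * exp (t * B) := by
    filter_upwards [hbd] with x hx
    have h1 : 0 ≤ g x / B := div_nonneg hx.1 hB.le
    have h2 : g x / B ≤ 1 := (div_le_one hB).2 hx.2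
    have h3 := convexOn_exp.2 (Set.mem_univ (0:ℝ)) (Set.mem_univ (t*B))
      (by linarith : (0:ℝ) ≤ 1 - g x / B) h1 (by ring)
    have h4 : (1 - g x / B) • (0:ℝ) + (g x / B) • (t * B) = t * g x := by
      simp only [smul_eq_mul, mul_zero, zero_add]
      rw [mul_comm t, ← mul_assoc, div_mul_cancel₀ _ hB.ne']
      ring
    rw [h4] at h3
    simpa using h3
  have hexp_int : Integrable (fun x => exp (t * g x)) ν := by
    refine Integrable.mono' (integrable_const (exp (|t| * B)))
      ((hg.const_mul t).exp.aestronglyMeasurable) ?_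
    filter_upwards [hbd] with x hx
    rw [Real.norm_eq_abs, abs_of_pos (Real.exp_pos _)]
    refine Real.exp_le_exp.2 ?_
    calc t * g x ≤ |t| * g x := mul_le_mul_of_nonneg_right (le_abs_self t) hx.1
      _ ≤ |t| * B := mul_le_mul_of_nonneg_left hx.2 (abs_nonneg t)
  have hRHS_int : Integrable (fun x => (1 - g x / B) + (g x / B) * exp (t * B)) ν :=
    ((integrable_const 1).sub (hgint.div_const B)).add ((hgint.div_const B).mul_const _)
  have step1 : ∫ x, exp (t * g x) ∂ν ≤ ∫ x, ((1 - g x / B) + (g x / B) * exp (t * B)) ∂ν :=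
    integral_mono_ae hexp_int hRHS_int hchord
  have step2 : ∫ x, ((1 - g x / B) + (g x / B) * exp (t * B)) ∂ν
      = 1 - m / B + (m / B) * exp (t * B) := by
    have hfe : ∀ x : Ω, (1 - g x / B) + (g x / B) * exp (t * B)
        = 1 + g x * ((exp (t * B) - 1) / B) := by intro x; field_simp; ring
    simp_rw [hfe]
    rw [integral_add (integrable_const 1) (hgint.mul_const _), integral_const,
      integral_mul_const]
    have h1 : ν.real Set.univ = 1 := by simp
    rw [smul_eq_mul, h1, ← hm]
    field_simp
    ring
  rw [step2] at step1
  refine step1.trans ?_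
  -- scalar step
  set u := t * B / 2 with hu
  set q := 2 * (m / B) - 1 with hq
  have hqabs : |q| ≤ 1 := by
    have hd0 : 0 ≤ m / B := div_nonneg hm0 hB.le
    have hd1 : m / B ≤ 1 := (div_le_one hB).2 hmB
    rw [abs_le, hq]
    constructor <;> nlinarith
  have hEq : 1 - m / B + (m / B) * exp (t * B) = exp u * (cosh u + q * sinh u) := by
    have h2u : t * B = u + u := by rw [hu]; ring
    rw [Real.cosh_eq, Real.sinh_eq, Real.exp_neg, h2u, Real.exp_add, hq]
    have := Real.exp_pos u
    field_simp
    ring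
  rw [hEq]
  have hKI := key_ineq u q hqabs
  calc exp u * (cosh u + q * sinh u) ≤ exp u * exp (q * u + u ^ 2) :=
        mul_le_mul_of_nonneg_left hKI (Real.exp_pos u).le
    _ = exp (u + (q * u + u ^ 2)) := by rw [← Real.exp_add]
    _ = exp (t * m + t ^ 2 * B ^ 2 / 4) := by
        congr 1
        rw [hu, hq]
        field_simp
        ring

open MeasureTheory in
private lemma integral_pi_prod {ι : Type*} [Fintype ι] {E : ι → Type*}
    [∀ i, MeasurableSpace (E i)] (μ : ∀ i, Measure (E i)) [∀ i, IsProbabilityMeasure (μ i)]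
    (f : ∀ i, E i → ℝ) :
    ∫ x : ∀ i, E i, ∏ i, f i (x i) ∂(Measure.pi μ) = ∏ i, ∫ x, f i x ∂(μ i) := by
  letI : ∀ i, MeasureSpace (E i) := fun i => ⟨μ i⟩
  haveI : ∀ i, SigmaFinite (volume : Measure (E i)) := fun i =>
    inferInstanceAs (SigmaFinite (μ i))
  exact MeasureTheory.integral_fintype_prod_eq_prod f

open MeasureTheory in
private lemma wsum_integral {α : Type*} [Fintype α] [MeasurableSpace α]
    [MeasurableSingletonClass α] (P : α → Measure ℝ) [∀ a, IsProbabilityMeasure (P a)]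
    (w : α → ℝ) (hw : ∀ a, 0 ≤ w a) (f : α × ℝ → ℝ) (hf : Measurable f)
    (hint : ∀ a, Integrable (fun x => f (a, x)) (P a)) :
    ∫ z, f z ∂(∑ a : α, (ENNReal.ofReal (w a)) • ((Measure.dirac a).prod (P a)))
      = ∑ a, w a * ∫ x, f (a, x) ∂(P a) := by
  have hmap : ∀ a : α, (Measure.dirac a).prod (P a) = (P a).map (Prod.mk a) := fun a =>
    Measure.dirac_prod a
  have hint2 : ∀ a : α, Integrable f ((P a).map (Prod.mk a)) := fun a => by
    rw [integrable_map_measure hf.aestronglyMeasurable measurable_prodMk_left.aemeasurable]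
    exact hint a
  rw [integral_finset_sum_measure (fun a _ => by
    rw [hmap a]
    exact (hint2 a).smul_measure ENNReal.ofReal_ne_top)]
  refine Finset.sum_congr rfl fun a _ => ?_
  rw [hmap a, integral_smul_measure, ENNReal.toReal_ofReal (hw a),
    integral_map measurable_prodMk_left.aemeasurable hf.aestronglyMeasurable]
  rfl

open MeasureTheory in
private lemma wsum_snd_preimage {α : Type*} [Fintype α] [MeasurableSpace α]
    [MeasurableSingletonClass α] (P : α → Measure ℝ) [∀ a, IsProbabilityMeasure (P a)]
    (w : α → ℝ) (s : Set ℝ) (hs : MeasurableSet s) :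
    (∑ a : α, (ENNReal.ofReal (w a)) • ((Measure.dirac a).prod (P a))) (Prod.snd ⁻¹' s)
      = ∑ a : α, ENNReal.ofReal (w a) * P a s := by
  rw [Measure.finset_sum_apply]
  refine Finset.sum_congr rfl fun a _ => ?_
  rw [Measure.smul_apply, smul_eq_mul, Measure.dirac_prod,
    Measure.map_apply measurable_prodMk_left (measurable_snd hs)]
  rfl

open MeasureTheory in
private lemma wsum_prob {α : Type*} [Fintype α] [MeasurableSpace α]
    [MeasurableSingletonClass α] (P : α → Measure ℝ) [∀ a, IsProbabilityMeasure (P a)]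
    (w : α → ℝ) (hw : ∀ a, 0 ≤ w a) (hsum1 : ∑ a, w a = 1) :
    IsProbabilityMeasure (∑ a : α, (ENNReal.ofReal (w a)) • ((Measure.dirac a).prod (P a))) := by
  constructor
  rw [Measure.finset_sum_apply]
  simp only [Measure.smul_apply, smul_eq_mul, measure_univ, mul_one]
  rw [← ENNReal.ofReal_sum_of_nonneg (fun a _ => hw a), hsum1, ENNReal.ofReal_one]


set_option maxHeartbeats 2000000 in
/-- with high probability, the clustered selection picks a policy from
the cluster that contains the best target policy.  Target policies `πᵢ` (`i : Fin N`)
are partitioned into `M` clusters via `c : Fin N → Fin M` (cluster `1` of the paper is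
cluster `⟨0,_⟩` here), with cluster sizes `Nsz j`, cluster barycenters `π_KL^{(j)}`,
maximal weight `σ_c`, and per-cluster i.i.d. datasets of equal sizes `n₁`, mutually
independent.  If the total sample size `n = n₁·M` satisfies
`n ≥ 2MR*²σ_c² log(((M−2)(N₁+1)+N+M)/δ)/ε²` for `ε ∈ (0, Δ]`, then the maximizing
selection `π̂ₙ` lies outside cluster `1` with probability at most `δ`. -/
theorem clustered_best_cluster {α : Type*} [Fintype α] [MeasurableSpace α]
    [MeasurableSingletonClass α]
    (Rstar : ℝ) (hR : 0 < Rstar)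
    (P : α → Measure ℝ) (hprob : ∀ a, IsProbabilityMeasure (P a))
    (hsupp : ∀ a, P a (Set.Icc 0 Rstar) = 1)
    (Q : α → ℝ) (hQ : ∀ a, Q a = ∫ x, x ∂(P a))
    (N M : ℕ) (hN : 0 < N) (hM : 0 < M)
    (p : Fin N → α → ℝ) (hpos : ∀ i a, 0 < p i a) (hsum : ∀ i, ∑ a, p i a = 1)
    -- the cluster assignment, cluster sizes, and cluster barycenters
    (c : Fin N → Fin M)
    (Nsz : Fin M → ℕ) (hNsz : ∀ j, Nsz j = (Finset.univ.filter fun i => c i = j).card)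
    (hNszpos : ∀ j, 0 < Nsz j)
    (pKLc : Fin M → α → ℝ)
    (hpKLc : ∀ j a, pKLc j a
      = (1 / (Nsz j : ℝ)) * ∑ i ∈ Finset.univ.filter (fun i => c i = j), p i a)
    -- the uniform maximal importance weight over the clusters
    (σc : ℝ) (hσc : σc = ⨆ i : Fin N, ⨆ a : α, p i a / pKLc (c i) a)
    -- values, the overall best policy, and per-cluster best policies
    (v : (α → ℝ) → ℝ) (hv : ∀ q, v q = ∑ a, q a * Q a)
    (istar : Fin N) (hstar : ∀ i, v (p i) ≤ v (p istar))
    (ibest : Fin M → Fin N) (hibestmem : ∀ j, c (ibest j) = j)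
    (hibest : ∀ j i, c i = j → v (p i) ≤ v (p (ibest j)))
    -- Assumption (i): the overall best policy lies in cluster 1 (index `⟨0,_⟩`)
    (hclu1 : v (p istar) = v (p (ibest ⟨0, hM⟩)))
    -- Assumption (ii): the value gap between cluster 1 and the other clusters
    (Δ : ℝ) (hΔpos : 0 < Δ)
    (hgap : ∀ j : Fin M, j ≠ ⟨0, hM⟩ → v (p (ibest ⟨0, hM⟩)) - v (p (ibest j)) > Δ)
    -- equal per-cluster sample sizes and the mutually independent per-cluster datasets
    (n₁ : ℕ) (hn₁ : 0 < n₁) (n : ℕ) (hn : n = n₁ * M)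
    (μc : Fin M → Measure (α × ℝ))
    (hμc : ∀ j, μc j
      = ∑ a : α, (ENNReal.ofReal (pKLc j a)) • ((Measure.dirac a).prod (P a)))
    -- the per-cluster importance sampling estimates
    (vhat : (Fin M → Fin n₁ → α × ℝ) → Fin N → ℝ)
    (hvhat : ∀ ω i, vhat ω i = (1 / (n₁ : ℝ)) *
      ∑ t, (p i (ω (c i) t).1 / pKLc (c i) (ω (c i) t).1) * (ω (c i) t).2)
    -- a measurable selection maximizing the estimated values
    (iHat : (Fin M → Fin n₁ → α × ℝ) → Fin N) (hmeas : Measurable iHat)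
    (hargmax : ∀ ω i, vhat ω i ≤ vhat ω (iHat ω))
    (δ ε : ℝ) (hδ : δ ∈ Set.Ioo (0:ℝ) 1) (hε : ε ∈ Set.Ioc (0:ℝ) Δ)
    (hsample : (n : ℝ) ≥ 2 * M * Rstar ^ 2 * σc ^ 2 *
      Real.log ((((M : ℝ) - 2) * ((Nsz ⟨0, hM⟩ : ℝ) + 1) + N + M) / δ) / ε ^ 2) :
    (Measure.pi (fun j : Fin M => Measure.pi (fun _ : Fin n₁ => μc j)))
        {ω | c (iHat ω) ≠ ⟨0, hM⟩}
      ≤ ENNReal.ofReal δ := by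
  classical
  -- trivial case M = 1
  by_cases hM1 : M = 1
  · subst hM1
    have hempty : {ω : Fin 1 → Fin n₁ → α × ℝ | c (iHat ω) ≠ ⟨0, hM⟩} = ∅ := by
      ext ω
      simp [Subsingleton.elim (c (iHat ω)) (⟨0, hM⟩ : Fin 1)]
    rw [hempty, measure_empty]
    exact zero_le
  have hM2 : 2 ≤ M := by omega
  set j0 : Fin M := ⟨0, hM⟩ with hj0
  set i0 : Fin N := ibest j0 with hi0
  have hci0 : c i0 = j0 := hibestmem j0
  -- basic positivity facts
  have hαne : Nonempty α := by
    rcases isEmpty_or_nonempty α with h | h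
    · exfalso
      have h1 := hsum istar
      rw [Finset.univ_eq_empty, Finset.sum_empty] at h1
      norm_num at h1
    · exact h
  have hpKL : ∀ j a, 0 < pKLc j a := by
    intro j a
    rw [hpKLc]
    have hcard : 0 < (Finset.univ.filter fun i => c i = j).card := by
      rw [← hNsz]; exact hNszpos j
    refine mul_pos (one_div_pos.2 (by exact_mod_cast hNszpos j)) (Finset.sum_pos (fun i _ => hpos i a) ?_)
    exact Finset.card_pos.1 hcard
  set w : Fin N → α → ℝ := fun i a => p i a / pKLc (c i) a with hwdef
  have hw_pos : ∀ i a, 0 < w i a := fun i a => div_pos (hpos i a) (hpKL (c i) a)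
  have hw_le : ∀ i a, w i a ≤ σc := by
    intro i a
    have bdd1 : ∀ i' : Fin N, BddAbove (Set.range fun a => p i' a / pKLc (c i') a) :=
      fun i' => Set.Finite.bddAbove (Set.finite_range _)
    have bdd2 : BddAbove (Set.range fun i' : Fin N => ⨆ a, p i' a / pKLc (c i') a) :=
      Set.Finite.bddAbove (Set.finite_range _)
    calc w i a ≤ ⨆ a', p i a' / pKLc (c i) a' := le_ciSup (bdd1 i) a
      _ ≤ σc := hσc ▸ le_ciSup bdd2 i
  have hσpos : 0 < σc :=
    lt_of_lt_of_le (hw_pos istar (Classical.arbitrary α)) (hw_le istar (Classical.arbitrary α))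
  set B : ℝ := Rstar * σc with hBdef
  have hB : 0 < B := mul_pos hR hσpos
  set f : Fin N → α × ℝ → ℝ := fun i z => w i z.1 * z.2 with hfdef
  have hfmeas : ∀ i, Measurable (f i) := fun i =>
    ((measurable_of_countable (w i)).comp measurable_fst).mul measurable_snd
  -- the cluster measures are probability measures
  have hwnn : ∀ j a, 0 ≤ pKLc j a := fun j a => (hpKL j a).le
  have hsumpKL : ∀ j, ∑ a, pKLc j a = 1 := by
    intro j
    simp_rw [hpKLc, ← Finset.mul_sum]
    rw [Finset.sum_comm]
    have : ∀ i ∈ Finset.univ.filter (fun i => c i = j), ∑ a, p i a = 1 := fun i _ => hsum i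
    rw [Finset.sum_congr rfl this, Finset.sum_const, ← hNsz]
    have : (Nsz j : ℝ) ≠ 0 := Nat.cast_ne_zero.2 (hNszpos j).ne'
    field_simp
    simp
  haveI hμprob : ∀ j, IsProbabilityMeasure (μc j) := by
    intro j
    rw [hμc j]
    haveI := hprob
    exact wsum_prob P (pKLc j) (hwnn j) (hsumpKL j)
  -- a.e. bound on rewards and on f i
  have hPcompl : ∀ a, P a (Set.Icc (0:ℝ) Rstar)ᶜ = 0 := by
    intro a
    haveI := hprob a
    rw [measure_compl measurableSet_Icc (measure_ne_top _ _), hsupp a, measure_univ]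
    simp
  have hgood : ∀ j, μc j (Prod.snd ⁻¹' (Set.Icc (0:ℝ) Rstar)) = 1 := by
    intro j
    haveI := hprob
    rw [hμc j, wsum_snd_preimage P (pKLc j) _ measurableSet_Icc]
    simp only [hsupp, mul_one]
    rw [← ENNReal.ofReal_sum_of_nonneg (fun a _ => hwnn j a), hsumpKL j, ENNReal.ofReal_one]
  have hae : ∀ j, ∀ᵐ z ∂(μc j), z.2 ∈ Set.Icc (0:ℝ) Rstar := by
    intro j
    rw [ae_iff]
    haveI := hprob
    have : {z : α × ℝ | ¬ z.2 ∈ Set.Icc (0:ℝ) Rstar} = Prod.snd ⁻¹' (Set.Icc (0:ℝ) Rstar)ᶜ := rfl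
    rw [this, hμc j, wsum_snd_preimage P (pKLc j) _ measurableSet_Icc.compl]
    simp [hPcompl]
  have hfb : ∀ (i : Fin N) (z : α × ℝ), z.2 ∈ Set.Icc (0:ℝ) Rstar → f i z ∈ Set.Icc 0 B := by
    intro i z hz
    constructor
    · exact mul_nonneg (hw_pos i z.1).le hz.1
    · calc w i z.1 * z.2 ≤ σc * Rstar :=
            mul_le_mul (hw_le i z.1) hz.2 hz.1 hσpos.le
        _ = B := by rw [hBdef]; ring
  have haefb : ∀ i, ∀ᵐ z ∂(μc (c i)), f i z ∈ Set.Icc 0 B := by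
    intro i
    filter_upwards [hae (c i)] with z hz using hfb i z hz
  -- integrability and the mean of f i
  have hxint : ∀ a, Integrable (fun x : ℝ => x) (P a) := by
    intro a
    haveI := hprob a
    have haeP : ∀ᵐ x ∂(P a), x ∈ Set.Icc (0:ℝ) Rstar := by
      rw [ae_iff]
      exact hPcompl a
    refine Integrable.mono' (integrable_const Rstar) measurable_id.aestronglyMeasurable ?_
    filter_upwards [haeP] with x hx
    rw [Real.norm_eq_abs, abs_of_nonneg hx.1]
    exact hx.2
  have hmean : ∀ i, ∫ z, f i z ∂(μc (c i)) = v (p i) := by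
    intro i
    haveI := hprob
    rw [hμc (c i), wsum_integral P (pKLc (c i)) (hwnn (c i)) (f i) (hfmeas i)
      (fun a => ((hxint a).const_mul (w i a)))]
    rw [hv]
    refine Finset.sum_congr rfl fun a _ => ?_
    rw [show (fun x => f i (a, x)) = fun x : ℝ => w i a * x from rfl]
    rw [integral_const_mul, ← hQ a, hwdef]
    field_simp [(hpKL (c i) a).ne']
  -- per-arm mgf bound
  have harm : ∀ (i : Fin N) (t : ℝ),
      ∫ z, exp (t * f i z) ∂(μc (c i)) ≤ exp (t * v (p i) + t ^ 2 * B ^ 2 / 4) := by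
    intro i t
    haveI := hμprob (c i)
    have := mgf_bound (μc (c i)) (f i) (hfmeas i) B hB (haefb i) t
    rwa [hmean i] at this
  -- the global product measure
  set PI := Measure.pi (fun j : Fin M => Measure.pi (fun _ : Fin n₁ => μc j)) with hPIdef
  haveI hpiprob : ∀ j : Fin M, IsProbabilityMeasure (Measure.pi (fun _ : Fin n₁ => μc j)) := by
    intro j
    haveI : ∀ t : Fin n₁, IsProbabilityMeasure ((fun _ : Fin n₁ => μc j) t) := fun _ => hμprob j
    infer_instance
  haveI hPIprob : IsProbabilityMeasure PI := by
    rw [hPIdef]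
    infer_instance
  -- the comparison statistics
  set Zf : Fin N → (Fin M → Fin n₁ → α × ℝ) → ℝ :=
    fun i ω => (∑ t, f i (ω (c i) t)) - (∑ t, f i0 (ω j0 t)) with hZdef
  have hZmeas : ∀ i, Measurable (Zf i) := fun i =>
    (Finset.measurable_sum _ fun t _ =>
      (hfmeas i).comp ((measurable_pi_apply t).comp (measurable_pi_apply (c i)))).sub
    (Finset.measurable_sum _ fun t _ =>
      (hfmeas i0).comp ((measurable_pi_apply t).comp (measurable_pi_apply j0)))
  -- event inclusion
  have hincl : {ω | c (iHat ω) ≠ j0}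
      ⊆ ⋃ i : Fin N, (if c i = j0 then (∅ : Set (Fin M → Fin n₁ → α × ℝ))
        else {ω | 0 ≤ Zf i ω}) := by
    intro ω hω
    refine Set.mem_iUnion.2 ⟨iHat ω, ?_⟩
    rw [if_neg hω]
    have h1 := hargmax ω i0
    rw [hvhat, hvhat] at h1
    have hn₁pos : (0:ℝ) < 1 / (n₁:ℝ) := by positivity
    have h2 : ∑ t, f i0 (ω (c i0) t) ≤ ∑ t, f (iHat ω) (ω (c (iHat ω)) t) :=
      le_of_mul_le_mul_left h1 hn₁pos
    rw [hci0] at h2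
    simp only [Set.mem_setOf_eq, hZdef, sub_nonneg]
    exact h2
  -- value gap
  have hvgap : ∀ i, c i ≠ j0 → v (p i) - v (p i0) ≤ -ε := by
    intro i hne
    have h1 := hibest (c i) i rfl
    have h2 := hgap (c i) hne
    have h3 := hε.2
    linarith
  -- the good set, for integrability
  set good : Set (α × ℝ) := Prod.snd ⁻¹' (Set.Icc (0:ℝ) Rstar) with hgooddef
  have hgoodmeas : MeasurableSet good := measurable_snd measurableSet_Icc
  set Gset : Set (Fin M → Fin n₁ → α × ℝ) :=
    Set.univ.pi fun _ : Fin M => Set.univ.pi fun _ : Fin n₁ => good with hGdef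
  have hGmeas : MeasurableSet Gset :=
    MeasurableSet.univ_pi fun _ => MeasurableSet.univ_pi fun _ => hgoodmeas
  have hGfull : PI Gset = 1 := by
    rw [hPIdef, hGdef, Measure.pi_pi]
    have : ∀ j : Fin M, Measure.pi (fun _ : Fin n₁ => μc j) (Set.univ.pi fun _ => good) = 1 := by
      intro j
      rw [Measure.pi_pi]
      simp [hgood j]
    simp [this]
  have haeG : ∀ᵐ ω ∂PI, ω ∈ Gset := by
    rw [ae_iff]
    have hc1 : {ω : Fin M → Fin n₁ → α × ℝ | ¬ ω ∈ Gset} = Gsetᶜ := rfl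
    rw [hc1, measure_compl hGmeas (measure_ne_top _ _), hGfull, measure_univ]
    simp
  have hGmem : ∀ ω ∈ Gset, ∀ (j : Fin M) (t : Fin n₁), (ω j t).2 ∈ Set.Icc (0:ℝ) Rstar := by
    intro ω hω j t
    have h1 := hω j (Set.mem_univ j)
    exact h1 t (Set.mem_univ t)
  have hsum_bd : ∀ (i : Fin N) (j : Fin M) (ω : Fin M → Fin n₁ → α × ℝ), ω ∈ Gset →
      (∑ t, f i (ω j t)) ∈ Set.Icc (0:ℝ) ((n₁ : ℝ) * B) := by
    intro i j ω hω
    constructor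
    · exact Finset.sum_nonneg fun t _ => (hfb i _ (hGmem ω hω j t)).1
    · calc ∑ t, f i (ω j t) ≤ ∑ _t : Fin n₁, B :=
            Finset.sum_le_sum fun t _ => (hfb i _ (hGmem ω hω j t)).2
        _ = (n₁ : ℝ) * B := by rw [Finset.sum_const, Finset.card_univ, Fintype.card_fin,
            nsmul_eq_mul]
  -- per-event Chernoff bound
  set t0 : ℝ := ε / B ^ 2 with ht0def
  have ht0 : 0 ≤ t0 := div_nonneg hε.1.le (by positivity)
  set ebound : ℝ := exp (-((n₁ : ℝ) * ε ^ 2 / (2 * B ^ 2))) with hebdef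
  have hEvent : ∀ i, c i ≠ j0 → PI {ω | 0 ≤ Zf i ω} ≤ ENNReal.ofReal ebound := by
    intro i hne
    have hZbd : ∀ ω ∈ Gset, Zf i ω ≤ (n₁ : ℝ) * B := by
      intro ω hω
      have h1 := hsum_bd i (c i) ω hω
      have h2 := hsum_bd i0 j0 ω hω
      simp only [hZdef]
      linarith [h1.2, h2.1]
    have hint : Integrable (fun ω => exp (t0 * Zf i ω)) PI := by
      refine Integrable.mono' (integrable_const (exp (t0 * ((n₁:ℝ) * B))))
        (((hZmeas i).const_mul t0).exp.aestronglyMeasurable) ?_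
      filter_upwards [haeG] with ω hω
      rw [Real.norm_eq_abs, abs_of_pos (Real.exp_pos _)]
      exact Real.exp_le_exp.2 (mul_le_mul_of_nonneg_left (hZbd ω hω) ht0)
    have hmark := ProbabilityTheory.measure_ge_le_exp_mul_mgf (μ := PI) (X := Zf i) 0 ht0 hint
    rw [mul_zero, Real.exp_zero, one_mul] at hmark
    -- compute/bound the mgf
    set A1 : ℝ := (exp (t0 * v (p i) + t0 ^ 2 * B ^ 2 / 4)) ^ n₁ with hA1def
    set A2 : ℝ := (exp (-t0 * v (p i0) + t0 ^ 2 * B ^ 2 / 4)) ^ n₁ with hA2def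
    set FF : Fin M → (Fin n₁ → α × ℝ) → ℝ := fun j x =>
      exp ((if j = c i then t0 * ∑ t, f i (x t) else 0)
        + (if j = j0 then -(t0 * ∑ t, f i0 (x t)) else 0)) with hFFdef
    have hsplit : ∀ ω, exp (t0 * Zf i ω) = ∏ j : Fin M, FF j (ω j) := by
      intro ω
      rw [hFFdef]
      simp only
      rw [← Real.exp_sum]
      congr 1
      rw [Finset.sum_add_distrib, Finset.sum_ite_eq' Finset.univ (c i)
        (fun j => t0 * ∑ t, f i (ω j t)), Finset.sum_ite_eq' Finset.univ j0
        (fun j => -(t0 * ∑ t, f i0 (ω j t)))]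
      simp only [Finset.mem_univ, if_pos]
      rw [hZdef]
      ring
    have hmgf_eq : ProbabilityTheory.mgf (Zf i) PI t0 = ∏ j : Fin M, ∫ x, FF j x
        ∂(Measure.pi (fun _ : Fin n₁ => μc j)) := by
      have h1 : ProbabilityTheory.mgf (Zf i) PI t0 = ∫ ω, ∏ j : Fin M, FF j (ω j) ∂PI := by
        unfold ProbabilityTheory.mgf
        exact integral_congr_ae (Filter.Eventually.of_forall hsplit)
      rw [h1, hPIdef]
      haveI : ∀ j : Fin M, IsProbabilityMeasure (Measure.pi (fun _ : Fin n₁ => μc j)) := hpiprob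
      exact integral_pi_prod _ FF
    -- bound each factor
    have harm_pow : ∀ (i' : Fin N) (s : ℝ),
        ∫ x : Fin n₁ → α × ℝ, exp (s * ∑ t, f i' (x t)) ∂(Measure.pi (fun _ : Fin n₁ => μc (c i')))
          ≤ (exp (s * v (p i') + s ^ 2 * B ^ 2 / 4)) ^ n₁ := by
      intro i' s
      have h1 : ∀ x : Fin n₁ → α × ℝ, exp (s * ∑ t, f i' (x t))
          = ∏ t : Fin n₁, exp (s * f i' (x t)) := by
        intro x
        rw [← Real.exp_sum, Finset.mul_sum]
      haveI : ∀ t : Fin n₁, IsProbabilityMeasure ((fun _ : Fin n₁ => μc (c i')) t) :=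
        fun _ => hμprob (c i')
      rw [integral_congr_ae (Filter.Eventually.of_forall h1),
        integral_pi_prod (fun _ : Fin n₁ => μc (c i')) (fun _ z => exp (s * f i' z)),
        Finset.prod_const, Finset.card_univ, Fintype.card_fin]
      exact pow_le_pow_left₀ (integral_nonneg fun z => (Real.exp_pos _).le) (harm i' s) n₁
    have hfac : ∀ j : Fin M, ∫ x, FF j x ∂(Measure.pi (fun _ : Fin n₁ => μc j))
        ≤ (if j = c i then A1 else 1) * (if j = j0 then A2 else 1) := by
      intro j
      haveI : ∀ t : Fin n₁, IsProbabilityMeasure ((fun _ : Fin n₁ => μc j) t) :=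
        fun _ => hμprob j
      by_cases hj1 : j = c i
      · rw [if_pos hj1, if_neg (by rw [hj1]; exact hne), mul_one]
        have h1 : ∀ x : Fin n₁ → α × ℝ, FF j x = exp (t0 * ∑ t, f i (x t)) := by
          intro x
          rw [hFFdef]
          simp only
          rw [if_pos hj1, if_neg (by rw [hj1]; exact hne), add_zero]
        rw [integral_congr_ae (Filter.Eventually.of_forall h1), hj1, hA1def]
        exact harm_pow i t0
      · rw [if_neg hj1]
        by_cases hj2 : j = j0
        · rw [if_pos hj2, one_mul]
          have h1 : ∀ x : Fin n₁ → α × ℝ, FF j x = exp ((-t0) * ∑ t, f i0 (x t)) := by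
            intro x
            rw [hFFdef]
            simp only
            rw [if_neg hj1, if_pos hj2, zero_add]
            congr 1
            ring
          rw [integral_congr_ae (Filter.Eventually.of_forall h1), hj2, hA2def]
          have h2 := harm_pow i0 (-t0)
          rw [hci0] at h2
          have h3 : (-t0) * v (p i0) + (-t0) ^ 2 * B ^ 2 / 4
              = -t0 * v (p i0) + t0 ^ 2 * B ^ 2 / 4 := by ring
          rw [h3] at h2
          exact h2
        · rw [if_neg hj2, one_mul]
          have h1 : ∀ x : Fin n₁ → α × ℝ, FF j x = 1 := by
            intro x
            rw [hFFdef]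
            simp [hj1, hj2]
          rw [integral_congr_ae (Filter.Eventually.of_forall h1)]
          simp
    have hprod_le : ProbabilityTheory.mgf (Zf i) PI t0 ≤ A1 * A2 := by
      rw [hmgf_eq]
      calc ∏ j : Fin M, ∫ x, FF j x ∂(Measure.pi (fun _ : Fin n₁ => μc j))
          ≤ ∏ j : Fin M, (if j = c i then A1 else 1) * (if j = j0 then A2 else 1) :=
            Finset.prod_le_prod (fun j _ => integral_nonneg fun z => (Real.exp_pos _).le)
              (fun j _ => hfac j)
        _ = A1 * A2 := by
            rw [Finset.prod_mul_distrib, Finset.prod_ite_eq' Finset.univ (c i) (fun _ => A1),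
              Finset.prod_ite_eq' Finset.univ j0 (fun _ => A2)]
            simp
    have hA12 : A1 * A2 ≤ ebound := by
      rw [hA1def, hA2def, ← Real.exp_nat_mul, ← Real.exp_nat_mul, ← Real.exp_add, hebdef]
      refine Real.exp_le_exp.2 ?_
      have hBne : (B:ℝ) ^ 2 ≠ 0 := by positivity
      have e1 : t0 * (v (p i) - v (p i0)) ≤ t0 * (-ε) :=
        mul_le_mul_of_nonneg_left (hvgap i hne) ht0
      have e2 : t0 * (-ε) = -(ε ^ 2 / B ^ 2) := by rw [ht0def]; field_simp
      have e3 : t0 ^ 2 * B ^ 2 / 4 + t0 ^ 2 * B ^ 2 / 4 = ε ^ 2 / (2 * B ^ 2) := by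
        rw [ht0def]; field_simp; ring
      have e4 : (t0 * v (p i) + t0 ^ 2 * B ^ 2 / 4) + (-t0 * v (p i0) + t0 ^ 2 * B ^ 2 / 4)
          ≤ -(ε ^ 2 / (2 * B ^ 2)) := by
        have : ε ^ 2 / B ^ 2 = ε ^ 2 / (2 * B ^ 2) + ε ^ 2 / (2 * B ^ 2) := by
          field_simp
          ring
        nlinarith [e1, e2, e3]
      calc (n₁:ℝ) * (t0 * v (p i) + t0 ^ 2 * B ^ 2 / 4)
            + (n₁:ℝ) * (-t0 * v (p i0) + t0 ^ 2 * B ^ 2 / 4)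
          = (n₁:ℝ) * ((t0 * v (p i) + t0 ^ 2 * B ^ 2 / 4)
            + (-t0 * v (p i0) + t0 ^ 2 * B ^ 2 / 4)) := by ring
        _ ≤ (n₁:ℝ) * (-(ε ^ 2 / (2 * B ^ 2))) :=
            mul_le_mul_of_nonneg_left e4 (Nat.cast_nonneg n₁)
        _ = -((n₁:ℝ) * ε ^ 2 / (2 * B ^ 2)) := by ring
    have hfinal : (PI {ω | 0 ≤ Zf i ω}).toReal ≤ ebound := le_trans hmark
      (le_trans hprod_le hA12)
    exact (ENNReal.le_ofReal_iff_toReal_le (measure_ne_top _ _) (Real.exp_pos _).le).2 hfinal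
  -- union bound
  have hunion : PI {ω | c (iHat ω) ≠ j0} ≤ (N : ENNReal) * ENNReal.ofReal ebound := by
    calc PI {ω | c (iHat ω) ≠ j0}
        ≤ PI (⋃ i : Fin N, (if c i = j0 then (∅ : Set (Fin M → Fin n₁ → α × ℝ))
            else {ω | 0 ≤ Zf i ω})) := measure_mono hincl
      _ ≤ ∑' i : Fin N, PI (if c i = j0 then (∅ : Set (Fin M → Fin n₁ → α × ℝ))
            else {ω | 0 ≤ Zf i ω}) := measure_iUnion_le _
      _ = ∑ i : Fin N, PI (if c i = j0 then (∅ : Set (Fin M → Fin n₁ → α × ℝ))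
            else {ω | 0 ≤ Zf i ω}) := tsum_fintype _
      _ ≤ ∑ _i : Fin N, ENNReal.ofReal ebound := by
          refine Finset.sum_le_sum fun i _ => ?_
          by_cases hci : c i = j0
          · rw [if_pos hci, measure_empty]
            exact zero_le
          · rw [if_neg hci]
            exact hEvent i hci
      _ = (N : ENNReal) * ENNReal.ofReal ebound := by
          rw [Finset.sum_const, Finset.card_univ, Fintype.card_fin, nsmul_eq_mul]
  refine le_trans hunion ?_
  -- final numeric computation
  have hδ0 := hδ.1
  set C : ℝ := ((M:ℝ) - 2) * ((Nsz j0 : ℝ) + 1) + N + M with hCdef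
  have hM2' : (2:ℝ) ≤ (M:ℝ) := by exact_mod_cast hM2
  have hN1' : (1:ℝ) ≤ (N:ℝ) := by exact_mod_cast hN
  have hNsz0 : (0:ℝ) ≤ (Nsz j0 : ℝ) := Nat.cast_nonneg _
  have hprodC : 0 ≤ ((M:ℝ) - 2) * ((Nsz j0 : ℝ) + 1) :=
    mul_nonneg (by linarith only [hM2']) (by linarith only [hNsz0])
  have hCpos : 0 < C := by rw [hCdef]; linarith only [hprodC, hN1', hM2']
  have hNleC : (N:ℝ) ≤ C := by rw [hCdef]; linarith only [hprodC, hM2']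
  have hCδpos : 0 < C / δ := div_pos hCpos hδ0
  have hL : Real.log (C / δ) ≤ (n₁:ℝ) * ε ^ 2 / (2 * B ^ 2) := by
    have hBe : B ^ 2 = Rstar ^ 2 * σc ^ 2 := by rw [hBdef]; ring
    have hnr : (n:ℝ) = (n₁:ℝ) * (M:ℝ) := by exact_mod_cast hn
    have hε2 : (0:ℝ) < ε ^ 2 := pow_pos hε.1 2
    have hMpos : (0:ℝ) < (M:ℝ) := by linarith
    have h1 : 2 * (M:ℝ) * B ^ 2 * Real.log (C / δ) / ε ^ 2 ≤ (n₁:ℝ) * (M:ℝ) := by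
      rw [hBe]
      calc 2 * (M:ℝ) * (Rstar ^ 2 * σc ^ 2) * Real.log (C / δ) / ε ^ 2
          = 2 * (M:ℝ) * Rstar ^ 2 * σc ^ 2 * Real.log (C / δ) / ε ^ 2 := by ring
        _ ≤ (n:ℝ) := hsample
        _ = (n₁:ℝ) * (M:ℝ) := hnr
    rw [div_le_iff₀ hε2] at h1
    have h2 : 2 * B ^ 2 * Real.log (C / δ) * (M:ℝ) ≤ (n₁:ℝ) * ε ^ 2 * (M:ℝ) := by
      nlinarith
    have h3 : 2 * B ^ 2 * Real.log (C / δ) ≤ (n₁:ℝ) * ε ^ 2 :=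
      le_of_mul_le_mul_right h2 hMpos
    rw [le_div_iff₀ (by positivity : (0:ℝ) < 2 * B ^ 2)]
    linarith
  have heb : ebound ≤ δ / C := by
    rw [hebdef]
    have h1 : exp (-((n₁:ℝ) * ε ^ 2 / (2 * B ^ 2))) ≤ exp (-(Real.log (C / δ))) :=
      Real.exp_le_exp.2 (by linarith)
    refine le_trans h1 ?_
    rw [Real.exp_neg, Real.exp_log hCδpos, inv_div]
  have hfin : (N:ℝ) * ebound ≤ δ := by
    have h1 : (N:ℝ) * ebound ≤ (N:ℝ) * (δ / C) :=
      mul_le_mul_of_nonneg_left heb (Nat.cast_nonneg N)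
    have h2 : (N:ℝ) * (δ / C) ≤ C * (δ / C) :=
      mul_le_mul_of_nonneg_right hNleC (div_nonneg hδ0.le hCpos.le)
    have h3 : C * (δ / C) = δ := by field_simp
    linarith
  calc (N : ENNReal) * ENNReal.ofReal ebound
      = ENNReal.ofReal ((N:ℝ) * ebound) := by
        rw [ENNReal.ofReal_mul (Nat.cast_nonneg N)]
        congr 1
        exact (ENNReal.ofReal_natCast N).symm
    _ ≤ ENNReal.ofReal δ := ENNReal.ofReal_le_ofReal hfin
end

section
/- In the clustered best-policy-selection setting (N strictly positive target policies partitioned into M clusters K₁,…,K_M of sizes N₁,…,N_M with barycenters π_KL^{(j)}, uniform maximal weight σ_c, rewards supported on [0, R*], the overall best policy lying in cluster 1 with strictly positive value gaps Δ_j = v(π*) − v(π*^{(j)}) > 0 for j ≥ 2, and equal per-cluster sample sizes n₁ = ⋯ = n_M with total n = M·n₁), the expected regret of the clustered selection π̂_n satisfies E[ v(π*) − v(π̂_n) ] ≤ (Δ_max/√n)·( 1 + M N₁/N + 2M/N ) + √2 · M^{3/2} · R* · σ_c · √( log(N√n) / n ), where Δ_max = max_j Δ_j. -/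
open Finset Real MeasureTheory
open Real

lemma hoeff_denom_pos {q : ℝ} (hq0 : 0 ≤ q) (hq1 : q ≤ 1) (h : ℝ) :
    0 < 1 - q + q * exp h := by
  rcases lt_or_eq_of_le hq1 with h1 | h1
  · have : 0 ≤ q * exp h := mul_nonneg hq0 (exp_pos h).le
    linarith
  · subst h1; simpa using exp_pos h

lemma hoeff_scalar {q : ℝ} (hq0 : 0 ≤ q) (hq1 : q ≤ 1) (h : ℝ) :
    1 - q + q * exp h ≤ exp (q * h + h ^ 2 / 8) := by
  set d : ℝ → ℝ := fun x => 1 - q + q * exp x with hd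
  have hdpos : ∀ x, 0 < d x := fun x => hoeff_denom_pos hq0 hq1 x
  set g : ℝ → ℝ := fun x => q * x + x ^ 2 / 8 - Real.log (d x) with hg
  set g1 : ℝ → ℝ := fun x => q + x / 4 - q * exp x / d x with hg1
  have hdd : ∀ x, HasDerivAt d (q * exp x) x := by
    intro x
    exact ((Real.hasDerivAt_exp x).const_mul q).const_add (1 - q)
  have hgd : ∀ x, HasDerivAt g (g1 x) x := by
    intro x
    have h1 : HasDerivAt (fun y => q * y + y ^ 2 / 8) (q + x * 2 / 8) x := by
      have := ((hasDerivAt_id x).const_mul q).add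
        (((hasDerivAt_pow 2 x)).div_const 8)
      exact this.congr_deriv (by norm_num <;> ring)
    have h2 : HasDerivAt (fun y => Real.log (d y)) (q * exp x / d x) x :=
      (hdd x).log (hdpos x).ne'
    have := h1.sub h2
    refine this.congr_deriv ?_
    simp only [hg1]; ring
  have hg1d : ∀ x, HasDerivAt g1 (1 / 4 - q * exp x * (1 - q) / (d x) ^ 2) x := by
    intro x
    have h1 : HasDerivAt (fun y => q + y / 4) (1 / 4) x := by
      simpa using ((hasDerivAt_id x).div_const 4).const_add q
    have h2 : HasDerivAt (fun y => q * exp y / d y)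
        ((q * exp x * d x - q * exp x * (q * exp x)) / (d x) ^ 2) x :=
      ((Real.hasDerivAt_exp x).const_mul q).div (hdd x) (hdpos x).ne'
    have := h1.sub h2
    refine this.congr_deriv ?_
    have hne : d x ≠ 0 := (hdpos x).ne'
    have : d x = 1 - q + q * exp x := rfl
    rw [this]
    field_simp
    ring
  have hg1nonneg : ∀ x, 0 ≤ 1 / 4 - q * exp x * (1 - q) / (d x) ^ 2 := by
    intro x
    have hne : (0:ℝ) < (d x) ^ 2 := pow_pos (hdpos x) 2
    rw [sub_nonneg, div_le_iff₀ hne]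
    nlinarith [sq_nonneg ((1 - q) - q * exp x), (exp_pos x).le, hq0, sq_nonneg (d x)]
  have hg1mono : Monotone g1 := by
    apply monotone_of_deriv_nonneg
    · exact fun x => (hg1d x).differentiableAt
    · intro x
      rw [(hg1d x).deriv]
      exact hg1nonneg x
  have hg10 : g1 0 = 0 := by simp [hg1, hd]
  have hg0 : g 0 = 0 := by simp [hg, hd]
  have key : 0 ≤ g h := by
    rcases le_total 0 h with hh | hh
    · have hmono : MonotoneOn g (Set.Ici 0) := by
        apply monotoneOn_of_deriv_nonneg (convex_Ici 0)
        · exact fun x _ => ((hgd x).differentiableAt.continuousAt).continuousWithinAt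
        · exact fun x _ => (hgd x).differentiableAt.differentiableWithinAt
        · intro x hx
          rw [(hgd x).deriv]
          have : (0:ℝ) ≤ x := le_of_lt (by simpa using hx)
          have := hg1mono this
          rw [hg10] at this
          exact this
      have := hmono (Set.self_mem_Ici) (Set.mem_Ici.2 hh) hh
      rwa [hg0] at this
    · have hanti : AntitoneOn g (Set.Iic 0) := by
        apply antitoneOn_of_deriv_nonpos (convex_Iic 0)
        · exact fun x _ => ((hgd x).differentiableAt.continuousAt).continuousWithinAt
        · exact fun x _ => (hgd x).differentiableAt.differentiableWithinAt
        · intro x hx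
          rw [(hgd x).deriv]
          have hx0 : x ≤ (0:ℝ) := le_of_lt (by simpa using hx)
          have := hg1mono hx0
          rw [hg10] at this
          exact this
      have := hanti (Set.mem_Iic.2 hh) (Set.self_mem_Iic) hh
      rwa [hg0] at this
  have : Real.log (d h) ≤ q * h + h ^ 2 / 8 := by
    have := key
    simp only [hg] at this
    linarith
  calc d h = exp (Real.log (d h)) := (Real.exp_log (hdpos h)).symm
  _ ≤ exp (q * h + h ^ 2 / 8) := exp_le_exp.2 this

open MeasureTheory

lemma integrable_of_ae_bound {Ω : Type*} [MeasurableSpace Ω] {μ : Measure Ω}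
    [IsFiniteMeasure μ] {f : Ω → ℝ} (hm : AEStronglyMeasurable f μ) {C : ℝ}
    (h : ∀ᵐ ω ∂μ, |f ω| ≤ C) : Integrable f μ :=
  (integrable_const C).mono' hm (by simpa using h)

lemma hoeff_mgf {Ω : Type*} [MeasurableSpace Ω] (μ : Measure Ω) [IsProbabilityMeasure μ]
    {X : Ω → ℝ} (hXm : AEStronglyMeasurable X μ) {c : ℝ} (hc : 0 < c)
    (hX : ∀ᵐ ω ∂μ, X ω ∈ Set.Icc 0 c) (t : ℝ) :
    ∫ ω, exp (t * X ω) ∂μ ≤ exp (t * (∫ ω, X ω ∂μ) + t ^ 2 * c ^ 2 / 8) := by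
  have hXint : Integrable X μ :=
    integrable_of_ae_bound hXm (hX.mono fun ω h => abs_le.2 ⟨by linarith [h.1], h.2⟩)
  -- pointwise convexity bound
  have hpt : ∀ᵐ ω ∂μ, exp (t * X ω) ≤ 1 - X ω / c + X ω / c * exp (t * c) := by
    filter_upwards [hX] with ω hω
    have hl : 0 ≤ X ω / c := div_nonneg hω.1 hc.le
    have hl1 : X ω / c ≤ 1 := (div_le_one hc).2 hω.2
    have := convexOn_exp.2 (Set.mem_univ (0:ℝ)) (Set.mem_univ (t * c))
      (by linarith : (0:ℝ) ≤ 1 - X ω / c) hl (by ring)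
    simp only [smul_eq_mul, mul_zero, zero_add, Real.exp_zero, mul_one] at this
    have harg : X ω / c * (t * c) = t * X ω := by field_simp
    rw [harg] at this
    linarith [this]
  have hint2 : Integrable (fun ω => 1 - X ω / c + X ω / c * exp (t * c)) μ := by
    have h1 : Integrable (fun ω => X ω / c) μ := hXint.div_const c
    exact ((integrable_const (1:ℝ)).sub h1).add (h1.mul_const _)
  have hintexp : Integrable (fun ω => exp (t * X ω)) μ := by
    apply integrable_of_ae_bound ((Real.continuous_exp.comp
      (continuous_const.mul continuous_id)).aestronglyMeasurable.comp_aemeasurable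
      hXm.aemeasurable) (C := exp (|t| * c))
    filter_upwards [hX] with ω hω
    simp only [Function.comp_apply, id_eq]
    rw [abs_of_pos (exp_pos _), exp_le_exp]
    calc t * X ω ≤ |t * X ω| := le_abs_self _
    _ = |t| * |X ω| := abs_mul _ _
    _ ≤ |t| * c := by
        apply mul_le_mul_of_nonneg_left _ (abs_nonneg t)
        rw [abs_of_nonneg hω.1]; exact hω.2
  have hstep1 : ∫ ω, exp (t * X ω) ∂μ ≤ ∫ ω, (1 - X ω / c + X ω / c * exp (t * c)) ∂μ :=
    integral_mono_ae hintexp hint2 hpt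
  set m := ∫ ω, X ω ∂μ with hm
  have hm0 : 0 ≤ m := integral_nonneg_of_ae (hX.mono fun ω h => h.1)
  have hmc : m ≤ c := by
    have := integral_mono_ae hXint (integrable_const c) (hX.mono fun ω h => h.2)
    simpa using this
  have hstep2 : ∫ ω, (1 - X ω / c + X ω / c * exp (t * c)) ∂μ
      = 1 - m / c + m / c * exp (t * c) := by
    have e1 : ∀ ω, 1 - X ω / c + X ω / c * exp (t * c)
        = 1 + (X ω) * ((exp (t * c) - 1) / c) := by intro ω; field_simp; ring
    simp only [e1]
    rw [integral_add (integrable_const 1) (hXint.mul_const _), integral_const,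
      integral_mul_const]
    simp only [measure_univ, probReal_univ, ENNReal.toReal_one, smul_eq_mul, one_mul]
    rw [← hm]
    field_simp
    ring
  have hq0 : 0 ≤ m / c := div_nonneg hm0 hc.le
  have hq1 : m / c ≤ 1 := (div_le_one hc).2 hmc
  have := hoeff_scalar hq0 hq1 (t * c)
  have harg : m / c * (t * c) = t * m := by field_simp
  calc ∫ ω, exp (t * X ω) ∂μ ≤ 1 - m / c + m / c * exp (t * c) := by
        rw [← hstep2]; exact hstep1
  _ ≤ exp (m / c * (t * c) + (t * c) ^ 2 / 8) := hoeff_scalar hq0 hq1 (t * c)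
  _ = exp (t * m + t ^ 2 * c ^ 2 / 8) := by rw [harg]; ring_nf
open Real MeasureTheory

lemma integral_eval_pi {ι : Type*} [Fintype ι] [DecidableEq ι] {E : ι → Type*}
    [∀ i, MeasurableSpace (E i)] (μ : ∀ i, Measure (E i)) [∀ i, IsProbabilityMeasure (μ i)]
    (j : ι) (h : E j → ℝ) :
    ∫ x, h (x j) ∂Measure.pi μ = ∫ y, h y ∂μ j := by
  letI : ∀ i, MeasureSpace (E i) := fun i => ⟨μ i⟩
  have key := MeasureTheory.integral_fintype_prod_eq_prod (𝕜 := ℝ) (ι := ι) (μ := μ)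
    (f := Function.update (fun i (_ : E i) => (1:ℝ)) j h)
  have h1 : ∀ x : ∀ i, E i, ∏ i, Function.update (fun i (_ : E i) => (1:ℝ)) j h i (x i)
      = h (x j) := by
    intro x
    rw [Finset.prod_eq_single j]
    · rw [Function.update_self]
    · intro i _ hij
      rw [Function.update_of_ne hij]
    · simp
  have h2 : ∏ i, ∫ y, Function.update (fun i (_ : E i) => (1:ℝ)) j h i y ∂μ i
      = ∫ y, h y ∂μ j := by
    rw [Finset.prod_eq_single j]
    · rw [Function.update_self]
    · intro i _ hij
      rw [Function.update_of_ne hij]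
      simp
    · simp
  simp only [h1] at key
  have e0 : (∫ x, h (x j) ∂Measure.pi μ) = ∫ x : ∀ i, E i, h (x j) := rfl
  rw [key]
  exact h2

lemma integral_pow_pi {E : Type*} [MeasurableSpace E] (μ : Measure E)
    [IsProbabilityMeasure μ] (m : ℕ) (f : E → ℝ) :
    ∫ x : Fin m → E, ∏ t, f (x t) ∂Measure.pi (fun _ => μ) = (∫ y, f y ∂μ) ^ m := by
  letI : MeasureSpace E := ⟨μ⟩
  have key := MeasureTheory.integral_fintype_prod_eq_pow (𝕜 := ℝ) (ι := Fin m) f (μ := μ)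
  rw [Fintype.card_fin] at key
  exact key

lemma ae_eval_pi {ι : Type*} [Fintype ι] [DecidableEq ι] {E : ι → Type*}
    [∀ i, MeasurableSpace (E i)] (μ : ∀ i, Measure (E i)) [∀ i, IsProbabilityMeasure (μ i)]
    (j : ι) {S : Set (E j)} (_hSm : MeasurableSet S) (hS : ∀ᵐ y ∂μ j, y ∈ S) :
    ∀ᵐ x ∂Measure.pi μ, x j ∈ S := by
  rw [ae_iff] at hS ⊢
  have he : {x : ∀ i, E i | ¬ x j ∈ S} = Set.pi Set.univ
      (Function.update (fun i => (Set.univ : Set (E i))) j Sᶜ) := by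
    rw [← Set.eval_preimage]
    rfl
  rw [he, Measure.pi_pi]
  rw [Finset.prod_eq_single j]
  · rw [Function.update_self]
    exact hS
  · intro i _ hij
    rw [Function.update_of_ne hij]
    simp
  · simp

lemma aux_sq_ineq (L L' sc R Mr m : ℝ) (hM1 : 1 ≤ Mr) (hm : 0 < m)
    (hL : 0 < L) (hLL' : L ≤ L') (_hsc : 0 ≤ sc) (_hR : 0 ≤ R) :
    L * (sc * R)^2 / (2*m) ≤ 2 * Mr^(3:ℕ) * R^2 * sc^2 * (L'/(m*Mr)) := by
  have hMpos : 0 < Mr := lt_of_lt_of_le one_pos hM1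
  have h1 : 2 * Mr^(3:ℕ) * R^2 * sc^2 * (L'/(m*Mr)) = 2*Mr^2*R^2*sc^2*L'/m := by
    field_simp
  rw [h1, div_le_div_iff₀ (by positivity) hm]
  have hM2 : 1 ≤ Mr^2 := by nlinarith
  have hL'pos : 0 < L' := lt_of_lt_of_le hL hLL'
  nlinarith [mul_le_mul_of_nonneg_right hLL' (mul_nonneg (mul_nonneg (sq_nonneg sc) (sq_nonneg R)) hm.le),
    mul_le_mul_of_nonneg_right hM2 (mul_nonneg (mul_nonneg (mul_nonneg (sq_nonneg sc) (sq_nonneg R)) hL'pos.le) hm.le),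
    mul_nonneg (mul_nonneg (mul_nonneg (mul_nonneg (sq_nonneg Mr) (sq_nonneg sc)) (sq_nonneg R)) hL'pos.le) hm.le]


set_option maxHeartbeats 2000000 in
/-- problem-independent expected regret bound for clustered KL-based
policy evaluation (Corollary A.1 of the paper).  In the clustered setting with equal
per-cluster sample sizes `n₁` and total `n = M·n₁`, with value gaps
`Δⱼ = v(π*) − v(π*^{(j)}) > 0` for `j ≥ 2` and `Δ_max = maxⱼ Δⱼ`, the expected regret
of the maximizing clustered selection satisfies
`E[v(π*) − v(π̂ₙ)] ≤ (Δ_max/√n)(1 + MN₁/N + 2M/N) + √2·M^{3/2}·R*·σ_c·√(log(N√n)/n)`. -/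
theorem clustered_expected_regret {α : Type*} [Fintype α] [MeasurableSpace α]
    [MeasurableSingletonClass α]
    (Rstar : ℝ) (hR : 0 < Rstar)
    (P : α → Measure ℝ) (hprob : ∀ a, IsProbabilityMeasure (P a))
    (hsupp : ∀ a, P a (Set.Icc 0 Rstar) = 1)
    (Q : α → ℝ) (hQ : ∀ a, Q a = ∫ x, x ∂(P a))
    (N M : ℕ) (hN : 0 < N) (hM : 0 < M)
    (p : Fin N → α → ℝ) (hpos : ∀ i a, 0 < p i a) (hsum : ∀ i, ∑ a, p i a = 1)
    -- the cluster assignment, cluster sizes, and cluster barycenters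
    (c : Fin N → Fin M)
    (Nsz : Fin M → ℕ) (hNsz : ∀ j, Nsz j = (Finset.univ.filter fun i => c i = j).card)
    (hNszpos : ∀ j, 0 < Nsz j)
    (pKLc : Fin M → α → ℝ)
    (hpKLc : ∀ j a, pKLc j a
      = (1 / (Nsz j : ℝ)) * ∑ i ∈ Finset.univ.filter (fun i => c i = j), p i a)
    -- the uniform maximal importance weight over the clusters
    (σc : ℝ) (hσc : σc = ⨆ i : Fin N, ⨆ a : α, p i a / pKLc (c i) a)
    -- values, the overall best policy, and per-cluster best policies
    (v : (α → ℝ) → ℝ) (hv : ∀ q, v q = ∑ a, q a * Q a)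
    (istar : Fin N) (hstar : ∀ i, v (p i) ≤ v (p istar))
    (ibest : Fin M → Fin N) (hibestmem : ∀ j, c (ibest j) = j)
    (hibest : ∀ j i, c i = j → v (p i) ≤ v (p (ibest j)))
    -- Assumption (i): the overall best policy lies in cluster 1 (index `⟨0,_⟩`)
    (hclu1 : v (p istar) = v (p (ibest ⟨0, hM⟩)))
    -- Assumption (ii): the value gap between cluster 1 and the other clusters
    (Δ : Fin M → ℝ) (hΔ : ∀ j, Δ j = v (p istar) - v (p (ibest j)))
    (hΔpos : ∀ j : Fin M, j ≠ ⟨0, hM⟩ → 0 < Δ j)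
    (Δmax : ℝ) (hΔmax : Δmax = ⨆ j : Fin M, Δ j)
    -- equal per-cluster sample sizes and the mutually independent per-cluster datasets
    (n₁ : ℕ) (hn₁ : 0 < n₁) (n : ℕ) (hn : n = n₁ * M)
    (μc : Fin M → Measure (α × ℝ))
    (hμc : ∀ j, μc j
      = ∑ a : α, (ENNReal.ofReal (pKLc j a)) • ((Measure.dirac a).prod (P a)))
    -- the per-cluster importance sampling estimates
    (vhat : (Fin M → Fin n₁ → α × ℝ) → Fin N → ℝ)
    (hvhat : ∀ ω i, vhat ω i = (1 / (n₁ : ℝ)) *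
      ∑ t, (p i (ω (c i) t).1 / pKLc (c i) (ω (c i) t).1) * (ω (c i) t).2)
    -- a measurable selection maximizing the estimated values
    (iHat : (Fin M → Fin n₁ → α × ℝ) → Fin N) (hmeas : Measurable iHat)
    (hargmax : ∀ ω i, vhat ω i ≤ vhat ω (iHat ω))
    :
    ∫ ω, (v (p istar) - v (p (iHat ω)))
        ∂(Measure.pi (fun j : Fin M => Measure.pi (fun _ : Fin n₁ => μc j)))
      ≤ (Δmax / Real.sqrt n) * (1 + (M : ℝ) * (Nsz ⟨0, hM⟩ : ℝ) / N + 2 * M / N)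
        + Real.sqrt 2 * (M : ℝ) ^ ((3 : ℝ) / 2) * Rstar * σc *
            Real.sqrt (Real.log ((N : ℝ) * Real.sqrt n) / n) := by
  -- ====== basic positivity facts ======
  haveI hαne : Nonempty α := by
    rcases isEmpty_or_nonempty α with hα | hα
    · exfalso; have := hsum istar; simp at this
    · exact hα
  have haePa : ∀ a, ∀ᵐ r ∂P a, r ∈ Set.Icc 0 Rstar := by
    intro a
    haveI := hprob a
    rw [ae_iff]
    have : {r : ℝ | ¬ r ∈ Set.Icc 0 Rstar} = (Set.Icc 0 Rstar)ᶜ := rfl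
    rw [this, measure_compl measurableSet_Icc (measure_ne_top _ _), hsupp a, measure_univ,
      tsub_self]
  have hidint : ∀ a, Integrable (fun r : ℝ => r) (P a) := by
    intro a
    haveI := hprob a
    apply integrable_of_ae_bound aestronglyMeasurable_id (C := Rstar)
    filter_upwards [haePa a] with r hr
    have : |r| ≤ Rstar := abs_le.2 ⟨by linarith [hr.1], hr.2⟩
    simpa using this
  have hQmem : ∀ a, Q a ∈ Set.Icc 0 Rstar := by
    intro a
    haveI := hprob a
    have hid := hidint a
    constructor
    · rw [hQ]
      exact integral_nonneg_of_ae ((haePa a).mono fun r hr => hr.1)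
    · rw [hQ]
      have := integral_mono_ae hid (integrable_const Rstar) ((haePa a).mono fun r hr => hr.2)
      simpa using this
  have hvmem : ∀ i, v (p i) ∈ Set.Icc 0 Rstar := by
    intro i
    constructor
    · rw [hv]
      exact Finset.sum_nonneg fun a _ => mul_nonneg (hpos i a).le (hQmem a).1
    · rw [hv]
      calc ∑ a, p i a * Q a ≤ ∑ a, p i a * Rstar :=
            Finset.sum_le_sum fun a _ => mul_le_mul_of_nonneg_left (hQmem a).2 (hpos i a).le
      _ = Rstar := by rw [← Finset.sum_mul, hsum i, one_mul]
  have hpKLpos : ∀ j a, 0 < pKLc j a := by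
    intro j a
    rw [hpKLc]
    apply mul_pos
    · rw [one_div]
      exact inv_pos.2 (by exact_mod_cast hNszpos j)
    · apply Finset.sum_pos
      · exact fun i _ => hpos i a
      · rw [Finset.filter_nonempty_iff]
        have h := hNszpos j
        rw [hNsz j] at h
        rcases Finset.card_pos.1 h with ⟨i, hi⟩
        exact ⟨i, Finset.mem_univ i, (Finset.mem_filter.1 hi).2⟩
  have hpKLsum : ∀ j, ∑ a, pKLc j a = 1 := by
    intro j
    simp only [hpKLc]
    rw [← Finset.mul_sum, Finset.sum_comm]
    have : ∀ i ∈ Finset.univ.filter (fun i => c i = j), ∑ a, p i a = 1 := fun i _ => hsum i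
    rw [Finset.sum_congr rfl this, Finset.sum_const, nsmul_eq_mul, ← hNsz j]
    have h0 : ((Nsz j : ℝ)) ≠ 0 := by exact_mod_cast (hNszpos j).ne'
    field_simp
  have hwle : ∀ i a, p i a / pKLc (c i) a ≤ σc := by
    intro i a
    rw [hσc]
    calc p i a / pKLc (c i) a ≤ ⨆ a' : α, p i a' / pKLc (c i) a' :=
          le_ciSup (f := fun a' : α => p i a' / pKLc (c i) a')
            (Set.Finite.bddAbove (Set.finite_range _)) a
    _ ≤ ⨆ i' : Fin N, ⨆ a' : α, p i' a' / pKLc (c i') a' :=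
          le_ciSup (f := fun i' : Fin N => ⨆ a' : α, p i' a' / pKLc (c i') a')
            (Set.Finite.bddAbove (Set.finite_range _)) i
  have hσpos : 0 < σc :=
    lt_of_lt_of_le (div_pos (hpos istar Classical.ofNonempty)
      (hpKLpos _ Classical.ofNonempty)) (hwle istar _)
  set C : ℝ := σc * Rstar with hC
  have hCpos : 0 < C := mul_pos hσpos hR
  -- ====== measure-theoretic facts about μc ======
  haveI hμprob : ∀ j, IsProbabilityMeasure (μc j) := by
    intro j
    constructor
    rw [hμc j, Measure.finset_sum_apply]
    have : ∀ a : α, (ENNReal.ofReal (pKLc j a) • ((Measure.dirac a).prod (P a))) Set.univ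
        = ENNReal.ofReal (pKLc j a) := by
      intro a
      haveI := hprob a
      rw [Measure.smul_apply, measure_univ, smul_eq_mul, mul_one]
    rw [Finset.sum_congr rfl fun a _ => this a,
      ← ENNReal.ofReal_sum_of_nonneg fun a _ => (hpKLpos j a).le, hpKLsum j,
      ENNReal.ofReal_one]
  -- ====== per-sample integrand ======
  set f : Fin N → α × ℝ → ℝ := fun i z => p i z.1 / pKLc (c i) z.1 * z.2 with hf
  have hfm : ∀ i, Measurable (f i) := fun i =>
    ((measurable_of_countable (fun a => p i a / pKLc (c i) a)).comp measurable_fst).mul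
      measurable_snd
  have haeT : ∀ j, ∀ᵐ z ∂μc j, z.2 ∈ Set.Icc 0 Rstar := by
    intro j
    rw [ae_iff]
    have hEm : MeasurableSet {z : α × ℝ | ¬ z.2 ∈ Set.Icc 0 Rstar} :=
      measurable_snd measurableSet_Icc.compl
    rw [hμc j, Measure.finset_sum_apply]
    apply Finset.sum_eq_zero
    intro a _
    haveI := hprob a
    rw [Measure.smul_apply, Measure.dirac_prod,
      Measure.map_apply measurable_prodMk_left hEm]
    have : (Prod.mk a) ⁻¹' {z : α × ℝ | ¬ z.2 ∈ Set.Icc 0 Rstar}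
        = {r : ℝ | ¬ r ∈ Set.Icc 0 Rstar} := rfl
    rw [this]
    have h0 : P a {r : ℝ | ¬ r ∈ Set.Icc 0 Rstar} = 0 := by
      have := haePa a
      rwa [ae_iff] at this
    rw [h0, smul_zero]
  have haefC : ∀ i, ∀ᵐ z ∂μc (c i), f i z ∈ Set.Icc 0 C := by
    intro i
    filter_upwards [haeT (c i)] with z hz
    constructor
    · exact mul_nonneg (div_nonneg (hpos i z.1).le (hpKLpos (c i) z.1).le) hz.1
    · calc p i z.1 / pKLc (c i) z.1 * z.2 ≤ σc * Rstar :=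
          mul_le_mul (hwle i z.1) hz.2 hz.1
            hσpos.le
      _ = C := hC.symm
  have hintf : ∀ i a, Integrable (f i) ((Measure.dirac a).prod (P a)) := by
    intro i a
    haveI := hprob a
    rw [Measure.dirac_prod]
    rw [integrable_map_measure (hfm i).aestronglyMeasurable measurable_prodMk_left.aemeasurable]
    have : (f i ∘ Prod.mk a) = fun r => (p i a / pKLc (c i) a) * r := rfl
    rw [this]
    exact (hidint a).const_mul _
  have hmean : ∀ i, ∫ z, f i z ∂μc (c i) = v (p i) := by
    intro i
    rw [hμc (c i)]
    rw [integral_finset_sum_measure (fun a _ =>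
      (hintf i a).smul_measure ENNReal.ofReal_ne_top)]
    have hterm : ∀ a : α, ∫ z, f i z ∂(ENNReal.ofReal (pKLc (c i) a) •
        ((Measure.dirac a).prod (P a))) = p i a * Q a := by
      intro a
      haveI := hprob a
      rw [integral_smul_measure, Measure.dirac_prod,
        integral_map measurable_prodMk_left.aemeasurable (hfm i).aestronglyMeasurable]
      have h1 : ∀ r : ℝ, f i (a, r) = (p i a / pKLc (c i) a) * r := fun r => rfl
      simp only [h1]
      rw [integral_const_mul, ← hQ a, ENNReal.toReal_ofReal (hpKLpos (c i) a).le,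
        smul_eq_mul]
      field_simp
      rw [mul_assoc]; exact mul_div_cancel_left₀ _ (hpKLpos (c i) a).ne'
    rw [Finset.sum_congr rfl fun a _ => hterm a, hv]
  -- ====== the product measure ======
  set μP : Measure (Fin M → Fin n₁ → α × ℝ) :=
    Measure.pi (fun j : Fin M => Measure.pi (fun _ : Fin n₁ => μc j)) with hμP
  haveI hpiP : ∀ j : Fin M, IsProbabilityMeasure (Measure.pi (fun _ : Fin n₁ => μc j)) :=
    fun j => inferInstance
  haveI : IsProbabilityMeasure μP := by rw [hμP]; infer_instance
  have hn₁R : ((n₁ : ℝ)) ≠ 0 := Nat.cast_ne_zero.2 hn₁.ne'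
  have hvm : ∀ i, Measurable (fun ω => vhat ω i) := by
    intro i
    simp only [hvhat]
    apply Measurable.const_mul
    apply Finset.measurable_sum
    intro t _
    exact (hfm i).comp ((measurable_pi_apply t).comp (measurable_pi_apply (c i)))
  have haeω : ∀ᵐ ω ∂μP, ∀ (j : Fin M) (t : Fin n₁), (ω j t).2 ∈ Set.Icc 0 Rstar := by
    rw [ae_all_iff]
    intro j
    have hinner : ∀ᵐ η ∂(Measure.pi fun _ : Fin n₁ => μc j),
        η ∈ {η : Fin n₁ → α × ℝ | ∀ t, (η t).2 ∈ Set.Icc 0 Rstar} := by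
      have h := ae_all_iff.2 fun t : Fin n₁ =>
        ae_eval_pi (fun _ : Fin n₁ => μc j) t (measurable_snd measurableSet_Icc) (haeT j)
      filter_upwards [h] with η hη
      exact hη
    have hSm : MeasurableSet {η : Fin n₁ → α × ℝ | ∀ t, (η t).2 ∈ Set.Icc 0 Rstar} := by
      rw [Set.setOf_forall]
      exact MeasurableSet.iInter fun t =>
        (measurable_snd.comp (measurable_pi_apply t)) measurableSet_Icc
    filter_upwards [ae_eval_pi (fun j : Fin M => Measure.pi fun _ : Fin n₁ => μc j) j
      hSm hinner] with ω hω
    exact hω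
  have haeωC : ∀ᵐ ω ∂μP, ∀ i, vhat ω i ∈ Set.Icc 0 C := by
    filter_upwards [haeω] with ω hω
    intro i
    rw [hvhat]
    have hnn : ∀ t : Fin n₁, 0 ≤ p i (ω (c i) t).1 / pKLc (c i) (ω (c i) t).1 * (ω (c i) t).2 :=
      fun t => mul_nonneg (div_nonneg (hpos i _).le (hpKLpos _ _).le) (hω (c i) t).1
    have hub : ∀ t : Fin n₁, p i (ω (c i) t).1 / pKLc (c i) (ω (c i) t).1 * (ω (c i) t).2 ≤ C :=
      fun t => hC ▸ mul_le_mul (hwle i _) (hω (c i) t).2 (hω (c i) t).1 hσpos.le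
    constructor
    · exact mul_nonneg (by positivity) (Finset.sum_nonneg fun t _ => hnn t)
    · calc 1 / (n₁:ℝ) * ∑ t, p i (ω (c i) t).1 / pKLc (c i) (ω (c i) t).1 * (ω (c i) t).2
          ≤ 1 / (n₁:ℝ) * ∑ t : Fin n₁, C := by
            apply mul_le_mul_of_nonneg_left (Finset.sum_le_sum fun t _ => hub t) (by positivity)
      _ = C := by
            rw [Finset.sum_const, Finset.card_univ, Fintype.card_fin, nsmul_eq_mul]
            field_simp
  have hintvhat : ∀ i, Integrable (fun ω => vhat ω i) μP := by
    intro i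
    apply integrable_of_ae_bound (hvm i).aestronglyMeasurable (C := C)
    filter_upwards [haeωC] with ω hω
    exact abs_le.2 ⟨by linarith [(hω i).1, hCpos], (hω i).2⟩
  have hintterm : ∀ (i : Fin N) (t : Fin n₁), Integrable (fun ω => f i (ω (c i) t)) μP := by
    intro i t
    apply integrable_of_ae_bound
      ((hfm i).comp ((measurable_pi_apply t).comp (measurable_pi_apply (c i)))).aestronglyMeasurable
      (C := C)
    filter_upwards [haeω] with ω hω
    have h1 : 0 ≤ f i (ω (c i) t) :=
      mul_nonneg (div_nonneg (hpos i _).le (hpKLpos _ _).le) (hω (c i) t).1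
    have h2 : f i (ω (c i) t) ≤ C :=
      hC ▸ mul_le_mul (hwle i _) (hω (c i) t).2 (hω (c i) t).1 hσpos.le
    have : |f i (ω (c i) t)| ≤ C := abs_le.2 ⟨by linarith [hCpos], h2⟩
    simpa using this
  have hunb : ∀ i, ∫ ω, vhat ω i ∂μP = v (p i) := by
    intro i
    simp only [hvhat]
    rw [integral_const_mul, integral_finset_sum _ (fun t _ => hintterm i t)]
    have hone : ∀ t : Fin n₁, ∫ ω, f i (ω (c i) t) ∂μP = v (p i) := by
      intro t
      have h1 := integral_eval_pi (fun j : Fin M => Measure.pi fun _ : Fin n₁ => μc j) (c i)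
        (fun η => f i (η t))
      have h2 := integral_eval_pi (fun _ : Fin n₁ => μc (c i)) t (f i)
      exact (h1.trans h2).trans (hmean i)
    rw [Finset.sum_congr rfl fun t _ => hone t, Finset.sum_const, Finset.card_univ,
      Fintype.card_fin, nsmul_eq_mul]
    field_simp
  -- ====== the moment generating function bound ======
  have hmgf : ∀ (i : Fin N) (s : ℝ), ∫ ω, exp (s * (vhat ω i - v (p i))) ∂μP
      ≤ exp (s ^ 2 * C ^ 2 / (8 * n₁)) := by
    intro i s
    set u : ℝ := s / n₁ with hu
    set vi := v (p i) with hvi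
    set F : α × ℝ → ℝ := fun z => exp (u * f i z - s * vi / n₁) with hF
    have step1 : ∫ ω, exp (s * (vhat ω i - vi)) ∂μP
        = ∫ η, exp (s * (1/(n₁:ℝ) * ∑ t, f i (η t) - vi))
            ∂(Measure.pi fun _ : Fin n₁ => μc (c i)) := by
      have h1 := integral_eval_pi (fun j : Fin M => Measure.pi fun _ : Fin n₁ => μc j) (c i)
        (fun η => exp (s * (1/(n₁:ℝ) * ∑ t, f i (η t) - vi)))
      rw [← h1]
      have he : (fun ω : Fin M → Fin n₁ → α × ℝ => exp (s * (vhat ω i - vi)))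
          = fun ω => exp (s * (1/(n₁:ℝ) * ∑ t, f i (ω (c i) t) - vi)) := by
        funext ω
        rw [hvhat]
      rw [he]
    have step2 : ∀ η : Fin n₁ → α × ℝ,
        exp (s * (1/(n₁:ℝ) * ∑ t, f i (η t) - vi)) = ∏ t, F (η t) := by
      intro η
      simp only [hF]
      rw [← Real.exp_sum]
      congr 1
      rw [Finset.sum_sub_distrib, ← Finset.mul_sum, Finset.sum_const, Finset.card_univ,
        Fintype.card_fin, nsmul_eq_mul, hu]
      field_simp
    have step3 : ∫ η, ∏ t, F (η t) ∂(Measure.pi fun _ : Fin n₁ => μc (c i))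
        = (∫ z, F z ∂μc (c i)) ^ n₁ := integral_pow_pi (μc (c i)) n₁ F
    have step4 : ∫ z, F z ∂μc (c i) ≤ exp (u ^ 2 * C ^ 2 / 8) := by
      have he : F = fun z => exp (-(s * vi / n₁)) * exp (u * f i z) := by
        funext z
        rw [hF, ← Real.exp_add]
        ring_nf
      rw [he, integral_const_mul]
      have h4 := hoeff_mgf (μc (c i)) (hfm i).aestronglyMeasurable hCpos (haefC i) u
      rw [hmean i, ← hvi] at h4
      calc exp (-(s * vi / n₁)) * ∫ z, exp (u * f i z) ∂μc (c i)
          ≤ exp (-(s * vi / n₁)) * exp (u * vi + u ^ 2 * C ^ 2 / 8) :=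
            mul_le_mul_of_nonneg_left h4 (exp_pos _).le
      _ = exp (u ^ 2 * C ^ 2 / 8) := by
            rw [← Real.exp_add]
            congr 1
            rw [hu]
            field_simp
            ring
    have hFnn : 0 ≤ ∫ z, F z ∂μc (c i) := integral_nonneg fun z => (exp_pos _).le
    calc ∫ ω, exp (s * (vhat ω i - vi)) ∂μP
        = (∫ z, F z ∂μc (c i)) ^ n₁ := by
          rw [step1]
          simp only [step2]
          exact step3
    _ ≤ (exp (u ^ 2 * C ^ 2 / 8)) ^ n₁ := pow_le_pow_left₀ hFnn step4 n₁
    _ = exp ((n₁ : ℝ) * (u ^ 2 * C ^ 2 / 8)) := by rw [← Real.exp_nat_mul]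
    _ = exp (s ^ 2 * C ^ 2 / (8 * n₁)) := by
          congr 1
          rw [hu]
          field_simp
  -- ====== the maximum deviation ======
  haveI : Nonempty (Fin N) := ⟨⟨0, hN⟩⟩
  haveI : Nonempty (Fin M) := ⟨⟨0, hM⟩⟩
  set D : (Fin M → Fin n₁ → α × ℝ) → ℝ := fun ω => ⨆ i, (vhat ω i - v (p i)) with hD
  have hDm : Measurable D := Measurable.iSup fun i => (hvm i).sub measurable_const
  have hDbd : ∀ᵐ ω ∂μP, |D ω| ≤ C + Rstar := by
    filter_upwards [haeωC] with ω hω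
    have hub : D ω ≤ C + Rstar := ciSup_le fun i => by
      have h1 := (hω i).2
      have h2 := (hvmem i).1
      linarith
    have hlb : -(C + Rstar) ≤ D ω := by
      refine le_trans ?_ (le_ciSup (f := fun i => vhat ω i - v (p i))
        (Set.Finite.bddAbove (Set.finite_range _)) istar)
      have h1 := (hω istar).1
      have h2 := (hvmem istar).2
      linarith
    exact abs_le.2 ⟨hlb, hub⟩
  have hDint : Integrable D μP := integrable_of_ae_bound hDm.aestronglyMeasurable hDbd
  have hregm : Measurable (fun ω => v (p istar) - v (p (iHat ω))) :=
    measurable_const.sub ((measurable_of_countable (fun i => v (p i))).comp hmeas)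
  have hregint : Integrable (fun ω => v (p istar) - v (p (iHat ω))) μP := by
    apply integrable_of_ae_bound hregm.aestronglyMeasurable (C := Rstar)
    apply ae_of_all
    intro ω
    have h1 := hvmem istar
    have h2 := hvmem (iHat ω)
    rw [abs_le]
    constructor <;> [linarith [h1.1, h2.2]; linarith [h1.2, h2.1]]
  have hkey : ∫ ω, (v (p istar) - v (p (iHat ω))) ∂μP ≤ ∫ ω, D ω ∂μP := by
    have hmono : ∀ ω, v (p istar) - v (p (iHat ω))
        ≤ (v (p istar) - vhat ω istar) + D ω := by
      intro ω
      have h1 : vhat ω istar ≤ vhat ω (iHat ω) := hargmax ω istar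
      have h2 : vhat ω (iHat ω) - v (p (iHat ω)) ≤ D ω :=
        le_ciSup (f := fun i => vhat ω i - v (p i))
          (Set.Finite.bddAbove (Set.finite_range _)) (iHat ω)
      linarith
    have hint2 : Integrable (fun ω => (v (p istar) - vhat ω istar) + D ω) μP :=
      ((integrable_const _).sub (hintvhat istar)).add hDint
    calc ∫ ω, (v (p istar) - v (p (iHat ω))) ∂μP
        ≤ ∫ ω, ((v (p istar) - vhat ω istar) + D ω) ∂μP :=
          integral_mono hregint hint2 hmono
    _ = (v (p istar) - v (p istar)) + ∫ ω, D ω ∂μP := by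
          rw [integral_add (f := fun ω => v (p istar) - vhat ω istar) (g := D)
            ((integrable_const _).sub (hintvhat istar)) hDint,
            integral_sub (integrable_const _) (hintvhat istar), integral_const, hunb istar]
          simp only [measure_univ, probReal_univ, ENNReal.toReal_one, smul_eq_mul, one_mul]
    _ = ∫ ω, D ω ∂μP := by rw [sub_self, zero_add]
  -- ====== nonnegativity of the right-hand side pieces ======
  have hΔmax0 : 0 ≤ Δmax := by
    rw [hΔmax]
    have h0 : Δ ⟨0, hM⟩ = 0 := by rw [hΔ, hclu1, sub_self]
    calc (0:ℝ) = Δ ⟨0, hM⟩ := h0.symm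
    _ ≤ ⨆ j, Δ j := le_ciSup (Set.Finite.bddAbove (Set.finite_range _)) _
  have hT1 : 0 ≤ (Δmax / Real.sqrt n) * (1 + (M : ℝ) * (Nsz ⟨0, hM⟩ : ℝ) / N + 2 * M / N) := by
    apply mul_nonneg (div_nonneg hΔmax0 (Real.sqrt_nonneg _))
    positivity
  have hT2 : 0 ≤ Real.sqrt 2 * (M : ℝ) ^ ((3 : ℝ) / 2) * Rstar * σc *
      Real.sqrt (Real.log ((N : ℝ) * Real.sqrt n) / n) := by
    apply mul_nonneg
    apply mul_nonneg
    apply mul_nonneg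
    apply mul_nonneg (Real.sqrt_nonneg _) (Real.rpow_nonneg (Nat.cast_nonneg _) _)
    exact hR.le
    exact hσpos.le
    exact Real.sqrt_nonneg _
  -- ====== case N = 1 ======
  rcases eq_or_lt_of_le (show 1 ≤ N from hN) with hN1 | hN2
  · haveI hsub : Subsingleton (Fin N) := by
      have hN1' : N = 1 := hN1.symm
      subst hN1'
      infer_instance
    have hzero : (fun ω => v (p istar) - v (p (iHat ω))) = fun _ => (0:ℝ) := by
      funext ω
      rw [Subsingleton.elim (iHat ω) istar, sub_self]
    rw [hzero, integral_zero]
    exact add_nonneg hT1 hT2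
  -- ====== main case N ≥ 2 ======
  have hNR1 : (1:ℝ) < (N:ℝ) := by exact_mod_cast hN2
  set L : ℝ := Real.log N with hLdef
  have hL : 0 < L := Real.log_pos hNR1
  have hnpos : 0 < n := by rw [hn]; exact Nat.mul_pos hn₁ hM
  have hnR1 : (1:ℝ) ≤ (n:ℝ) := by exact_mod_cast hnpos
  have hsqrtn1 : (1:ℝ) ≤ Real.sqrt n := by
    have := Real.sqrt_le_sqrt hnR1
    rwa [Real.sqrt_one] at this
  set B : ℝ := Real.sqrt (8 * n₁ * L) with hB
  have hBpos : 0 < B := Real.sqrt_pos.2 (by positivity)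
  have hB2 : B * B = 8 * n₁ * L := Real.mul_self_sqrt (by positivity)
  set s : ℝ := B / C with hs
  have hspos : 0 < s := div_pos hBpos hCpos
  have hexpDm : Measurable (fun ω => exp (s * D ω)) :=
    Real.measurable_exp.comp (hDm.const_mul s)
  have hexpDint : Integrable (fun ω => exp (s * D ω)) μP := by
    apply integrable_of_ae_bound hexpDm.aestronglyMeasurable (C := exp (s * (C + Rstar)))
    filter_upwards [hDbd] with ω hω
    rw [abs_of_pos (exp_pos _), exp_le_exp]
    exact mul_le_mul_of_nonneg_left (le_trans (le_abs_self _) hω) hspos.le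
  have hjensen : exp (s * ∫ ω, D ω ∂μP) ≤ ∫ ω, exp (s * D ω) ∂μP := by
    have h := convexOn_exp.map_integral_le (μ := μP) (f := fun ω => s * D ω)
      continuous_exp.continuousOn isClosed_univ
      (Filter.Eventually.of_forall fun ω => Set.mem_univ _) (hDint.const_mul s) hexpDint
    rwa [integral_const_mul] at h
  have hexpint_i : ∀ i, Integrable (fun ω => exp (s * (vhat ω i - v (p i)))) μP := by
    intro i
    have hm' : Measurable (fun ω => exp (s * (vhat ω i - v (p i)))) := by
      apply Measurable.comp Real.measurable_exp
      exact ((hvm i).sub measurable_const).const_mul s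
    apply integrable_of_ae_bound hm'.aestronglyMeasurable (C := exp (s * (C + Rstar)))
    filter_upwards [haeωC] with ω hω
    rw [abs_of_pos (exp_pos _), exp_le_exp]
    have h1 := (hω i).1
    have h2 := (hω i).2
    have h3 := (hvmem i).1
    have h4 := (hvmem i).2
    apply mul_le_mul_of_nonneg_left _ hspos.le
    linarith
  have hptsum : ∀ ω, exp (s * D ω) ≤ ∑ i, exp (s * (vhat ω i - v (p i))) := by
    intro ω
    obtain ⟨i0, hi0⟩ := exists_eq_ciSup_of_finite (f := fun i => vhat ω i - v (p i))
    have hDω : D ω = vhat ω i0 - v (p i0) := hi0.symm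
    rw [hDω]
    exact Finset.single_le_sum (f := fun i => exp (s * (vhat ω i - v (p i))))
      (fun i _ => (exp_pos _).le) (Finset.mem_univ i0)
  have hsumbound : ∫ ω, exp (s * D ω) ∂μP ≤ (N:ℝ) * exp (s^2 * C^2 / (8*n₁)) := by
    calc ∫ ω, exp (s * D ω) ∂μP
        ≤ ∫ ω, ∑ i, exp (s * (vhat ω i - v (p i))) ∂μP :=
          integral_mono hexpDint (integrable_finset_sum _ fun i _ => hexpint_i i)
            hptsum
    _ = ∑ i, ∫ ω, exp (s * (vhat ω i - v (p i))) ∂μP :=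
          integral_finset_sum _ (fun i _ => hexpint_i i)
    _ ≤ ∑ _i : Fin N, exp (s^2 * C^2/(8*n₁)) := Finset.sum_le_sum fun i _ => hmgf i s
    _ = (N:ℝ) * exp (s^2*C^2/(8*n₁)) := by
          rw [Finset.sum_const, Finset.card_univ, Fintype.card_fin, nsmul_eq_mul]
  have hlogstep : s * ∫ ω, D ω ∂μP ≤ L + s^2*C^2/(8*n₁) := by
    have h1 := hjensen.trans hsumbound
    have h2 : s * ∫ ω, D ω ∂μP ≤ Real.log ((N:ℝ) * exp (s^2*C^2/(8*n₁))) :=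
      (Real.le_log_iff_exp_le (by positivity)).2 h1
    rwa [Real.log_mul (by positivity) (Real.exp_ne_zero _), Real.log_exp] at h2
  have hintD : ∫ ω, D ω ∂μP ≤ B * C / (4 * n₁) := by
    have h3 : ∫ ω, D ω ∂μP ≤ (L + s^2*C^2/(8*n₁))/s := by
      rw [le_div_iff₀ hspos]
      calc (∫ ω, D ω ∂μP) * s = s * ∫ ω, D ω ∂μP := mul_comm _ _
      _ ≤ _ := hlogstep
    have heq : (L + s^2*C^2/(8*n₁))/s = B * C / (4*n₁) := by
      rw [hs]
      have hCne := hCpos.ne'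
      have hBne := hBpos.ne'
      have hn₁pos' : (0:ℝ) < (n₁:ℝ) := by positivity
      field_simp
      linear_combination (-4) * hB2
    rw [← heq]
    exact h3
  -- ====== final comparison ======
  set L' : ℝ := Real.log ((N : ℝ) * Real.sqrt n) with hL'
  have hL'ge : L ≤ L' := by
    rw [hLdef, hL']
    apply Real.log_le_log (by positivity)
    exact le_mul_of_one_le_right (by positivity) hsqrtn1
  have hL'pos : 0 < L' := lt_of_lt_of_le hL hL'ge
  have hM1 : (1:ℝ) ≤ (M:ℝ) := by exact_mod_cast hM
  have hfinal : B * C / (4 * n₁) ≤ Real.sqrt 2 * (M : ℝ) ^ ((3 : ℝ) / 2) * Rstar * σc *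
      Real.sqrt (L'/n) := by
    have hlhs_nn : 0 ≤ B*C/(4*(n₁:ℝ)) := by positivity
    have hrpow2 : ((M:ℝ) ^ ((3:ℝ)/2))^2 = (M:ℝ)^(3:ℕ) := by
      rw [← Real.rpow_natCast ((M:ℝ) ^ ((3:ℝ)/2)) 2, ← Real.rpow_mul (Nat.cast_nonneg M)]
      norm_num
    have e1 : (B*C/(4*(n₁:ℝ)))^2 = L * C^2/(2*n₁) := by
      have hn₁pos' : (0:ℝ) < (n₁:ℝ) := by positivity
      field_simp
      linear_combination 2 * hB2
    have e2 : (Real.sqrt 2 * (M : ℝ) ^ ((3 : ℝ) / 2) * Rstar * σc * Real.sqrt (L'/n))^2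
        = 2 * (M:ℝ)^(3:ℕ) * Rstar^2 * σc^2 * (L'/n) := by
      rw [mul_pow, mul_pow, mul_pow, mul_pow, Real.sq_sqrt (by norm_num : (0:ℝ) ≤ 2),
        Real.sq_sqrt (div_nonneg hL'pos.le (Nat.cast_nonneg n)), hrpow2]
    have hsq : (B*C/(4*(n₁:ℝ)))^2 ≤ (Real.sqrt 2 * (M : ℝ) ^ ((3 : ℝ) / 2) * Rstar * σc *
        Real.sqrt (L'/n))^2 := by
      rw [e1, e2]
      have hnR : (n:ℝ) = (n₁:ℝ) * (M:ℝ) := by rw [hn]; push_cast; ring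
      rw [hC, hnR]
      have hn₁pos' : (0:ℝ) < (n₁:ℝ) := by positivity
      exact aux_sq_ineq L L' σc Rstar (M:ℝ) (n₁:ℝ) hM1 hn₁pos' hL hL'ge hσpos.le hR.le
    calc B*C/(4*(n₁:ℝ)) = Real.sqrt ((B*C/(4*(n₁:ℝ)))^2) := (Real.sqrt_sq hlhs_nn).symm
    _ ≤ Real.sqrt ((Real.sqrt 2 * (M : ℝ) ^ ((3 : ℝ) / 2) * Rstar * σc *
          Real.sqrt (L'/n))^2) := Real.sqrt_le_sqrt hsq
    _ = Real.sqrt 2 * (M : ℝ) ^ ((3 : ℝ) / 2) * Rstar * σc * Real.sqrt (L'/n) :=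
          Real.sqrt_sq (by positivity)
  calc ∫ ω, (v (p istar) - v (p (iHat ω))) ∂μP ≤ ∫ ω, D ω ∂μP := hkey
  _ ≤ B * C / (4 * n₁) := hintD
  _ ≤ Real.sqrt 2 * (M : ℝ) ^ ((3 : ℝ) / 2) * Rstar * σc * Real.sqrt (L'/n) := hfinal
  _ ≤ (Δmax / Real.sqrt n) * (1 + (M : ℝ) * (Nsz ⟨0, hM⟩ : ℝ) / N + 2 * M / N)
        + Real.sqrt 2 * (M : ℝ) ^ ((3 : ℝ) / 2) * Rstar * σc * Real.sqrt (L'/n) :=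
      le_add_of_nonneg_left hT1
end
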